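/- arXiv:2412.20031 — 3 statements merged into one kernel-verified Lean document; each statement's English description precedes it below -/
import Mathlib

section
/- For n ≥ 1, the signed count over all overpartitions π of n with at least one overlined part, weighted by (-1)^{ℓ_{N≤O}(π)} (where ℓ_{N≤O}(π) counts non-overlined parts of size ≤ the largest overlined part), equals p'_o(n) - p'_e(n), where p'_o(n) (resp. p'_e(n)) is the number of partitions of n whose smallest part appears an odd (resp. even) number of times. -/
open scoped Classical

/-- An overpartition of `n`: a finite set of overlined part sizes (the first
occurrence of a size may be overlined, so overlined parts are distinct)
together with a multiset of non-overlined parts, all parts positive,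
with total sum `n`. -/
structure Overpartition (n : ℕ) where
  overParts : Finset ℕ
  plain : Multiset ℕ
  over_pos : ∀ x ∈ overParts, 0 < x
  plain_pos : ∀ x ∈ plain, 0 < x
  sum_eq : (∑ x ∈ overParts, x) + plain.sum = n

namespace Overpartition
variable {n : ℕ}

theorem ext' {π ρ : Overpartition n} (h1 : π.overParts = ρ.overParts) (h2 : π.plain = ρ.plain) :
    π = ρ := by cases π; cases ρ; simp_all

theorem card_le_sum {s : Multiset ℕ} (h : ∀ x ∈ s, 0 < x) : Multiset.card s ≤ s.sum := by
  induction s using Multiset.induction with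
  | empty => simp
  | cons a s ih =>
    simp only [Multiset.card_cons, Multiset.sum_cons]
    have := h a (Multiset.mem_cons_self a s)
    have := ih (fun x hx => h x (Multiset.mem_cons_of_mem hx))
    omega

theorem sum_map_two_mul (s : Multiset ℕ) : (s.map (fun x => 2 * x)).sum = 2 * s.sum := by
  induction s using Multiset.induction with
  | empty => simp
  | cons a s ih => simp [ih]; ring

theorem sum_map_two_mul_add_one (s : Multiset ℕ) :
    (s.map (fun x => 2 * x + 1)).sum = 2 * s.sum + Multiset.card s := by
  induction s using Multiset.induction with
  | empty => simp
  | cons a s ih => simp [ih]; ring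

theorem finset_sum_eq (s : Finset ℕ) : (∑ x ∈ s, x) = s.val.sum := by
  rw [← Finset.sum_map_val, Multiset.map_id']

def esum (π : Overpartition n) : ℕ :=
  2 * (∑ x ∈ π.overParts, x) + 2 * π.plain.sum + Multiset.card π.plain

theorem esum_le (π : Overpartition n) : π.esum ≤ 3 * n := by
  have h1 := π.sum_eq
  have h2 := card_le_sum π.plain_pos
  unfold esum; omega

def emulti (π : Overpartition n) : Multiset ℕ :=
  π.overParts.val.map (fun x => 2 * x) + π.plain.map (fun x => 2 * x + 1) +
    Multiset.replicate (3 * n - π.esum) 1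

noncomputable def encode (π : Overpartition n) : Nat.Partition (3 * n) where
  parts := π.emulti
  parts_pos := by
    intro i hi
    simp only [emulti, Multiset.mem_add, Multiset.mem_map, Multiset.mem_replicate] at hi
    rcases hi with (⟨x, hx, rfl⟩ | ⟨x, hx, rfl⟩) | ⟨-, rfl⟩
    · have := π.over_pos x hx; omega
    · omega
    · omega
  parts_sum := by
    have h := π.esum_le
    simp only [emulti, Multiset.sum_add, Multiset.sum_replicate, smul_eq_mul, mul_one,
      sum_map_two_mul, sum_map_two_mul_add_one, ← finset_sum_eq]
    unfold esum at h ⊢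
    omega

theorem encode_inj : Function.Injective (encode (n := n)) := by
  intro π ρ h
  have h' : π.emulti = ρ.emulti := congrArg Nat.Partition.parts h
  have key : ∀ (σ : Overpartition n),
      (σ.emulti.filter (fun x => x % 2 = 0)).map (fun x => x / 2) = σ.overParts.val ∧
      ((σ.emulti.filter (fun x => x % 2 = 1 ∧ x ≠ 1)).map (fun x => x / 2)) = σ.plain := by
    intro σ
    have fA0 : Multiset.filter (fun x => x % 2 = 0) (σ.overParts.val.map (fun x => 2 * x))
        = σ.overParts.val.map (fun x => 2 * x) := by
      rw [Multiset.filter_eq_self]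
      intro a ha
      obtain ⟨x, -, rfl⟩ := Multiset.mem_map.1 ha
      omega
    have fB0 : Multiset.filter (fun x => x % 2 = 0) (σ.plain.map (fun x => 2 * x + 1))
        = 0 := by
      rw [Multiset.filter_eq_nil]
      intro a ha
      obtain ⟨x, -, rfl⟩ := Multiset.mem_map.1 ha
      omega
    have fC0 : Multiset.filter (fun x => x % 2 = 0) (Multiset.replicate (3 * n - σ.esum) 1)
        = 0 := by
      rw [Multiset.filter_eq_nil]
      intro a ha
      rw [Multiset.eq_of_mem_replicate ha]
      omega
    have fA1 : Multiset.filter (fun x => x % 2 = 1 ∧ x ≠ 1) (σ.overParts.val.map (fun x => 2 * x))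
        = 0 := by
      rw [Multiset.filter_eq_nil]
      intro a ha
      obtain ⟨x, -, rfl⟩ := Multiset.mem_map.1 ha
      omega
    have fB1 : Multiset.filter (fun x => x % 2 = 1 ∧ x ≠ 1) (σ.plain.map (fun x => 2 * x + 1))
        = σ.plain.map (fun x => 2 * x + 1) := by
      rw [Multiset.filter_eq_self]
      intro a ha
      obtain ⟨x, hx, rfl⟩ := Multiset.mem_map.1 ha
      have := σ.plain_pos x hx
      omega
    have fC1 : Multiset.filter (fun x => x % 2 = 1 ∧ x ≠ 1) (Multiset.replicate (3 * n - σ.esum) 1)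
        = 0 := by
      rw [Multiset.filter_eq_nil]
      intro a ha
      rw [Multiset.eq_of_mem_replicate ha]
      tauto
    constructor
    · rw [emulti, Multiset.filter_add, Multiset.filter_add, fA0, fB0, fC0, add_zero, add_zero,
        Multiset.map_map]
      have : ((fun x => x / 2) ∘ (fun x : ℕ => 2 * x)) = id := by funext x; simp
      rw [this, Multiset.map_id]
    · rw [emulti, Multiset.filter_add, Multiset.filter_add, fA1, fB1, fC1, add_zero, zero_add,
        Multiset.map_map]
      have : ((fun x => x / 2) ∘ (fun x : ℕ => 2 * x + 1)) = id := by
        funext x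
        simp only [Function.comp_apply, id_eq]
        omega
      rw [this, Multiset.map_id]
  obtain ⟨k1, k2⟩ := key π
  obtain ⟨l1, l2⟩ := key ρ
  apply ext'
  · exact Finset.val_injective (by rw [← k1, ← l1, h'])
  · rw [← k2, ← l2, h']

noncomputable instance : Fintype (Overpartition n) :=
  Fintype.ofInjective encode encode_inj

/-- the largest overlined part (0 if none) -/
noncomputable def mx (π : Overpartition n) : ℕ :=
  if h : π.overParts.Nonempty then π.overParts.max' h else 0

theorem mx_mem (π : Overpartition n) (h : π.overParts.Nonempty) : mx π ∈ π.overParts := by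
  rw [mx, dif_pos h]; exact π.overParts.max'_mem h

theorem le_mx (π : Overpartition n) {x : ℕ} (hx : x ∈ π.overParts) : x ≤ mx π := by
  rw [mx, dif_pos ⟨x, hx⟩]; exact π.overParts.le_max' x hx

theorem mx_eq (π : Overpartition n) {m : ℕ} (hm : m ∈ π.overParts)
    (hle : ∀ x ∈ π.overParts, x ≤ m) : mx π = m :=
  le_antisymm (by rw [mx, dif_pos ⟨m, hm⟩]; exact Finset.max'_le _ _ _ hle) (le_mx π hm)

noncomputable def Jset (π : Overpartition n) : Finset ℕ :=
  (π.overParts.erase (mx π)) ∪ (π.plain.filter (fun x => x < mx π)).toFinset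

theorem mem_Jset {π : Overpartition n} {x : ℕ} :
    x ∈ Jset π ↔ (x ∈ π.overParts ∧ x ≠ mx π) ∨ (x ∈ π.plain ∧ x < mx π) := by
  simp [Jset, Finset.mem_union, Finset.mem_erase, Multiset.mem_toFinset, Multiset.mem_filter,
    and_comm]

theorem over_nonempty_of_J {π : Overpartition n} (h : (Jset π).Nonempty) :
    π.overParts.Nonempty := by
  obtain ⟨x, hx⟩ := h
  rcases mem_Jset.1 hx with ⟨hx, -⟩ | ⟨-, hx⟩
  · exact ⟨x, hx⟩
  · by_contra hne
    rw [mx, dif_neg hne] at hx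
    omega

theorem j_lt_mx {π : Overpartition n} {x : ℕ} (hx : x ∈ Jset π) : x < mx π := by
  rcases mem_Jset.1 hx with ⟨h1, h2⟩ | ⟨-, h2⟩
  · exact lt_of_le_of_ne (le_mx π h1) h2
  · exact h2

def ell (π : Overpartition n) : ℕ :=
  Multiset.card (π.plain.filter (fun x => ∃ y ∈ π.overParts, x ≤ y))

theorem ell_eq (π : Overpartition n) (h : π.overParts.Nonempty) :
    ell π = Multiset.card (π.plain.filter (fun x => x ≤ mx π)) := by
  rw [ell]
  congr 1
  apply Multiset.filter_congr
  intro x _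
  constructor
  · rintro ⟨y, hy, hxy⟩; exact hxy.trans (le_mx π hy)
  · intro hx; exact ⟨mx π, mx_mem π h, hx⟩

/-- The sign-reversing involution. -/
noncomputable def toggle (π : Overpartition n) : Overpartition n :=
  if h : (Jset π).Nonempty then
    if hj : (Jset π).min' h ∈ π.overParts then
      { overParts := π.overParts.erase ((Jset π).min' h)
        plain := (Jset π).min' h ::ₘ π.plain
        over_pos := fun x hx => π.over_pos x (Finset.mem_of_mem_erase hx)
        plain_pos := by
          intro x hx
          rcases Multiset.mem_cons.1 hx with rfl | hx
          · exact π.over_pos _ hj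
          · exact π.plain_pos x hx
        sum_eq := by
          have e1 : ∑ x ∈ π.overParts.erase ((Jset π).min' h), x + (Jset π).min' h
              = ∑ x ∈ π.overParts, x := Finset.sum_erase_add π.overParts _ hj
          have e2 := π.sum_eq
          rw [Multiset.sum_cons]
          omega }
    else
      { overParts := insert ((Jset π).min' h) π.overParts
        plain := π.plain.erase ((Jset π).min' h)
        over_pos := by
          intro x hx
          rcases Finset.mem_insert.1 hx with rfl | hx
          · have hj' : (Jset π).min' h ∈ π.plain := by
              rcases mem_Jset.1 ((Jset π).min'_mem h) with ⟨h1, -⟩ | ⟨h1, -⟩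
              · exact absurd h1 hj
              · exact h1
            exact π.plain_pos _ hj'
          · exact π.over_pos x hx
        plain_pos := fun x hx => π.plain_pos x (Multiset.mem_of_mem_erase hx)
        sum_eq := by
          have hj' : (Jset π).min' h ∈ π.plain := by
            rcases mem_Jset.1 ((Jset π).min'_mem h) with ⟨h1, -⟩ | ⟨h1, -⟩
            · exact absurd h1 hj
            · exact h1
          rw [Finset.sum_insert hj]
          have e1 : π.plain.sum = (Jset π).min' h + (π.plain.erase ((Jset π).min' h)).sum := by
            conv_lhs => rw [← Multiset.cons_erase hj', Multiset.sum_cons]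
          have e2 := π.sum_eq
          omega }
  else π

theorem toggle_over (π : Overpartition n) (h : (Jset π).Nonempty) :
    (toggle π).overParts = if (Jset π).min' h ∈ π.overParts then π.overParts.erase ((Jset π).min' h)
      else insert ((Jset π).min' h) π.overParts := by
  rw [toggle, dif_pos h]
  split_ifs <;> rfl

theorem toggle_plain (π : Overpartition n) (h : (Jset π).Nonempty) :
    (toggle π).plain = if (Jset π).min' h ∈ π.overParts then (Jset π).min' h ::ₘ π.plain
      else π.plain.erase ((Jset π).min' h) := by
  rw [toggle, dif_pos h]
  split_ifs <;> rfl

theorem min'_mem_plain {π : Overpartition n} (h : (Jset π).Nonempty)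
    (hj : (Jset π).min' h ∉ π.overParts) : (Jset π).min' h ∈ π.plain := by
  rcases mem_Jset.1 ((Jset π).min'_mem h) with ⟨h1, -⟩ | ⟨h1, -⟩
  · exact absurd h1 hj
  · exact h1

theorem toggle_mx (π : Overpartition n) (h : (Jset π).Nonempty) :
    mx π ∈ (toggle π).overParts ∧ mx (toggle π) = mx π := by
  have hne := over_nonempty_of_J h
  have hlt : (Jset π).min' h < mx π := j_lt_mx ((Jset π).min'_mem h)
  have hmem : mx π ∈ (toggle π).overParts := by
    rw [toggle_over π h]
    split_ifs with hj
    · exact Finset.mem_erase.2 ⟨by omega, mx_mem π hne⟩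
    · exact Finset.mem_insert_of_mem (mx_mem π hne)
  refine ⟨hmem, mx_eq _ hmem ?_⟩
  intro x hx
  rw [toggle_over π h] at hx
  split_ifs at hx with hj
  · exact le_mx π (Finset.mem_of_mem_erase hx)
  · rcases Finset.mem_insert.1 hx with rfl | hx
    · omega
    · exact le_mx π hx

theorem toggle_over_nonempty (π : Overpartition n) (h : (Jset π).Nonempty) :
    (toggle π).overParts.Nonempty := ⟨mx π, (toggle_mx π h).1⟩

theorem toggle_Jset (π : Overpartition n) (h : (Jset π).Nonempty) :
    Jset (toggle π) = Jset π := by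
  have hne := over_nonempty_of_J h
  have hlt : (Jset π).min' h < mx π := j_lt_mx ((Jset π).min'_mem h)
  ext x
  rw [mem_Jset, mem_Jset, (toggle_mx π h).2, toggle_over π h, toggle_plain π h]
  split_ifs with hj
  · by_cases hx : x = (Jset π).min' h
    · subst hx
      simp only [Finset.mem_erase, Multiset.mem_cons]
      constructor
      · intro _; exact Or.inl ⟨hj, by omega⟩
      · intro _; exact Or.inr ⟨Or.inl trivial, hlt⟩
    · simp only [Finset.mem_erase, Multiset.mem_cons]
      constructor
      · rintro (⟨⟨-, h1⟩, h2⟩ | ⟨(h1 | h1), h2⟩)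
        · exact Or.inl ⟨h1, h2⟩
        · exact absurd h1 hx
        · exact Or.inr ⟨h1, h2⟩
      · rintro (⟨h1, h2⟩ | ⟨h1, h2⟩)
        · exact Or.inl ⟨⟨hx, h1⟩, h2⟩
        · exact Or.inr ⟨Or.inr h1, h2⟩
  · have hjp := min'_mem_plain h hj
    by_cases hx : x = (Jset π).min' h
    · subst hx
      simp only [Finset.mem_insert]
      constructor
      · intro _; exact Or.inr ⟨hjp, hlt⟩
      · intro _; exact Or.inl ⟨Or.inl trivial, by omega⟩
    · simp only [Finset.mem_insert]
      rw [Multiset.mem_erase_of_ne hx]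
      constructor
      · rintro (⟨(h1 | h1), h2⟩ | ⟨h1, h2⟩)
        · exact absurd h1 hx
        · exact Or.inl ⟨h1, h2⟩
        · exact Or.inr ⟨h1, h2⟩
      · rintro (⟨h1, h2⟩ | ⟨h1, h2⟩)
        · exact Or.inl ⟨Or.inr h1, h2⟩
        · exact Or.inr ⟨h1, h2⟩

theorem toggle_toggle (π : Overpartition n) (h : (Jset π).Nonempty) :
    toggle (toggle π) = π := by
  have h2 : (Jset (toggle π)).Nonempty := by rw [toggle_Jset π h]; exact h
  have hj2 : (Jset (toggle π)).min' h2 = (Jset π).min' h := by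
    simp only [toggle_Jset π h]
  by_cases hj : (Jset π).min' h ∈ π.overParts
  · have hov : (toggle π).overParts = π.overParts.erase ((Jset π).min' h) := by
      rw [toggle_over π h, if_pos hj]
    have hpl : (toggle π).plain = (Jset π).min' h ::ₘ π.plain := by
      rw [toggle_plain π h, if_pos hj]
    have hnot : (Jset (toggle π)).min' h2 ∉ (toggle π).overParts := by
      rw [hj2, hov]; exact Finset.notMem_erase _ _
    apply ext'
    · rw [toggle_over _ h2, if_neg hnot, hj2, hov, Finset.insert_erase hj]
    · rw [toggle_plain _ h2, if_neg hnot, hj2, hpl, Multiset.erase_cons_head]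
  · have hjp := min'_mem_plain h hj
    have hov : (toggle π).overParts = insert ((Jset π).min' h) π.overParts := by
      rw [toggle_over π h, if_neg hj]
    have hpl : (toggle π).plain = π.plain.erase ((Jset π).min' h) := by
      rw [toggle_plain π h, if_neg hj]
    have hyes : (Jset (toggle π)).min' h2 ∈ (toggle π).overParts := by
      rw [hj2, hov]; exact Finset.mem_insert_self _ _
    apply ext'
    · rw [toggle_over _ h2, if_pos hyes, hj2, hov, Finset.erase_insert hj]
    · rw [toggle_plain _ h2, if_pos hyes, hj2, hpl, Multiset.cons_erase hjp]

theorem toggle_ell (π : Overpartition n) (h : (Jset π).Nonempty) :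
    ell (toggle π) = ell π + 1 ∨ ell π = ell (toggle π) + 1 := by
  have hne := over_nonempty_of_J h
  have hlt : (Jset π).min' h < mx π := j_lt_mx ((Jset π).min'_mem h)
  have hne2 := toggle_over_nonempty π h
  rw [ell_eq _ hne2, ell_eq _ hne, (toggle_mx π h).2, toggle_plain π h]
  split_ifs with hj
  · left
    rw [Multiset.filter_cons_of_pos (p := fun x => x ≤ mx π) _
      (by omega : ((fun x => x ≤ mx π) ((Jset π).min' h) : Prop))]
    simp
  · right
    have hjp := min'_mem_plain h hj
    conv_lhs => rw [← Multiset.cons_erase hjp]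
    rw [Multiset.filter_cons_of_pos (p := fun x => x ≤ mx π) _
      (by omega : ((fun x => x ≤ mx π) ((Jset π).min' h) : Prop))]
    simp

theorem fix_iff {π : Overpartition n} (hne : π.overParts.Nonempty) :
    Jset π = ∅ ↔ π.overParts = {mx π} ∧ ∀ x ∈ π.plain, mx π ≤ x := by
  constructor
  · intro hJ
    have hmem : ∀ x, x ∉ Jset π := by rw [hJ]; simp
    constructor
    · ext x
      simp only [Finset.mem_singleton]
      constructor
      · intro hx
        by_contra hne'
        exact hmem x (mem_Jset.2 (Or.inl ⟨hx, hne'⟩))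
      · rintro rfl; exact mx_mem π hne
    · intro x hx
      by_contra hlt
      exact hmem x (mem_Jset.2 (Or.inr ⟨hx, by omega⟩))
  · rintro ⟨hov, hpl⟩
    rw [Finset.eq_empty_iff_forall_notMem]
    intro x hx
    rcases mem_Jset.1 hx with ⟨h1, h2⟩ | ⟨h1, h2⟩
    · rw [hov, Finset.mem_singleton] at h1; exact h2 h1
    · exact absurd (hpl x h1) (by omega)

section FixPart

theorem parts_ne (hn : 1 ≤ n) (p : n.Partition) : p.parts ≠ 0 := by
  intro h
  have := p.parts_sum
  rw [h] at this
  simp at this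
  omega

theorem sp_mem (hn : 1 ≤ n) (p : n.Partition) : sInf {x | x ∈ p.parts} ∈ p.parts := by
  obtain ⟨x, hx⟩ := Multiset.exists_mem_of_ne_zero (parts_ne hn p)
  exact Nat.sInf_mem (⟨x, hx⟩ : Set.Nonempty {x | x ∈ p.parts})

theorem sp_le (p : n.Partition) {x : ℕ} (hx : x ∈ p.parts) :
    sInf {y | y ∈ p.parts} ≤ x := Nat.sInf_le hx

/-- The bijection from fixed points to partitions. -/
noncomputable def fixEquiv (hn : 1 ≤ n) :
    {π : Overpartition n // π.overParts.Nonempty ∧ Jset π = ∅} ≃ n.Partition where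
  toFun x :=
    { parts := mx x.1 ::ₘ x.1.plain
      parts_pos := by
        intro i hi
        rcases Multiset.mem_cons.1 hi with rfl | hi
        · exact x.1.over_pos _ (mx_mem x.1 x.2.1)
        · exact x.1.plain_pos _ hi
      parts_sum := by
        have hov := ((fix_iff x.2.1).1 x.2.2).1
        have := x.1.sum_eq
        rw [hov, Finset.sum_singleton] at this
        rw [Multiset.sum_cons]
        exact this }
  invFun p :=
    ⟨{ overParts := {sInf {x | x ∈ p.parts}}
       plain := p.parts.erase (sInf {x | x ∈ p.parts})
       over_pos := by
         intro x hx
         rw [Finset.mem_singleton] at hx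
         subst hx
         exact p.parts_pos (sp_mem hn p)
       plain_pos := fun x hx => p.parts_pos (Multiset.mem_of_mem_erase hx)
       sum_eq := by
         rw [Finset.sum_singleton]
         have : sInf {x | x ∈ p.parts} ::ₘ p.parts.erase (sInf {x | x ∈ p.parts}) = p.parts :=
           Multiset.cons_erase (sp_mem hn p)
         have h2 := congrArg Multiset.sum this
         rw [Multiset.sum_cons] at h2
         rw [h2, p.parts_sum] },
     by
      constructor
      · exact Finset.singleton_nonempty _
      · have hmx : ∀ σ : Overpartition n, σ.overParts = {sInf {x | x ∈ p.parts}} →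
            mx σ = sInf {x | x ∈ p.parts} := by
          intro σ hσ
          apply mx_eq
          · rw [hσ]; exact Finset.mem_singleton_self _
          · intro x hx; rw [hσ, Finset.mem_singleton] at hx; omega
        rw [fix_iff (Finset.singleton_nonempty _), hmx _ rfl]
        constructor
        · rfl
        · intro x hx
          exact sp_le p (Multiset.mem_of_mem_erase hx)⟩
  left_inv := by
    rintro ⟨π, hne, hfix⟩
    have hov := ((fix_iff hne).1 hfix).1
    have hpl := ((fix_iff hne).1 hfix).2
    have hs : sInf {x | x ∈ mx π ::ₘ π.plain} = mx π := by
      apply le_antisymm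
      · exact Nat.sInf_le (Multiset.mem_cons_self _ _)
      · apply le_csInf ⟨mx π, Multiset.mem_cons_self _ _⟩
        intro b hb
        rcases Multiset.mem_cons.1 hb with rfl | hb
        · exact le_refl _
        · exact hpl b hb
    apply Subtype.ext
    apply ext' <;> simp only [hs]
    · rw [hov]
    · rw [Multiset.erase_cons_head]
  right_inv := by
    intro p
    have hmx : ∀ (σ : Overpartition n), σ.overParts = {sInf {x | x ∈ p.parts}} →
        mx σ = sInf {x | x ∈ p.parts} := by
      intro σ hσ
      apply mx_eq
      · rw [hσ]; exact Finset.mem_singleton_self _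
      · intro x hx; rw [hσ, Finset.mem_singleton] at hx; omega
    apply Nat.Partition.ext
    simp only
    rw [hmx _ rfl, Multiset.cons_erase (sp_mem hn p)]

theorem fixEquiv_count (hn : 1 ≤ n) (x : {π : Overpartition n // π.overParts.Nonempty ∧ Jset π = ∅}) :
    (fixEquiv hn x).parts.count (sInf {y | y ∈ (fixEquiv hn x).parts}) = ell x.1 + 1 := by
  obtain ⟨π, hne, hfix⟩ := x
  have hov := ((fix_iff hne).1 hfix).1
  have hpl := ((fix_iff hne).1 hfix).2
  have hparts : (fixEquiv hn ⟨π, hne, hfix⟩).parts = mx π ::ₘ π.plain := rfl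
  have hs : sInf {x | x ∈ mx π ::ₘ π.plain} = mx π := by
    apply le_antisymm
    · exact Nat.sInf_le (Multiset.mem_cons_self _ _)
    · apply le_csInf ⟨mx π, Multiset.mem_cons_self _ _⟩
      intro b hb
      rcases Multiset.mem_cons.1 hb with rfl | hb
      · exact le_refl _
      · exact hpl b hb
  rw [hparts, hs, Multiset.count_cons_self]
  congr 1
  rw [ell_eq π hne]
  have : Multiset.filter (fun x => x ≤ mx π) π.plain
      = Multiset.filter (fun x => mx π = x) π.plain := by
    apply Multiset.filter_congr
    intro x hx
    have := hpl x hx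
    constructor
    · intro h; omega
    · intro h; omega
  rw [this, ← Multiset.countP_eq_card_filter]
  rfl

end FixPart
theorem card_split (E : Overpartition n → Prop) :
    Nat.card {π : Overpartition n // π.overParts.Nonempty ∧ E π}
      = Nat.card {π : Overpartition n // π.overParts.Nonempty ∧ Jset π = ∅ ∧ E π}
        + Nat.card {π : Overpartition n // π.overParts.Nonempty ∧ Jset π ≠ ∅ ∧ E π} := by
  have hd : Disjoint (fun π : Overpartition n => π.overParts.Nonempty ∧ Jset π = ∅ ∧ E π)
      (fun π : Overpartition n => π.overParts.Nonempty ∧ Jset π ≠ ∅ ∧ E π) :=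
    Pi.disjoint_iff.2 fun π => Prop.disjoint_iff.2 (by tauto)
  rw [Nat.card_congr (Equiv.subtypeEquivRight
    (q := fun π : Overpartition n => (π.overParts.Nonempty ∧ Jset π = ∅ ∧ E π)
      ∨ (π.overParts.Nonempty ∧ Jset π ≠ ∅ ∧ E π)) (fun π => by tauto))]
  rw [Nat.card_congr (subtypeOrEquiv _ _ hd), Nat.card_sum]

noncomputable def togEquiv :
    {π : Overpartition n // π.overParts.Nonempty ∧ Jset π ≠ ∅ ∧ Even (ell π)} ≃
      {π : Overpartition n // π.overParts.Nonempty ∧ Jset π ≠ ∅ ∧ Odd (ell π)} where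
  toFun x := ⟨toggle x.1, by
    have hJ : (Jset x.1).Nonempty := Finset.nonempty_iff_ne_empty.2 x.2.2.1
    refine ⟨toggle_over_nonempty _ hJ, ?_, ?_⟩
    · rw [toggle_Jset _ hJ]; exact x.2.2.1
    · have := toggle_ell x.1 hJ
      have he := x.2.2.2
      rcases this with h | h <;>
        · rw [Nat.odd_iff]; rw [Nat.even_iff] at he; omega⟩
  invFun x := ⟨toggle x.1, by
    have hJ : (Jset x.1).Nonempty := Finset.nonempty_iff_ne_empty.2 x.2.2.1
    refine ⟨toggle_over_nonempty _ hJ, ?_, ?_⟩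
    · rw [toggle_Jset _ hJ]; exact x.2.2.1
    · have := toggle_ell x.1 hJ
      have he := x.2.2.2
      rcases this with h | h <;>
        · rw [Nat.even_iff]; rw [Nat.odd_iff] at he; omega⟩
  left_inv x := Subtype.ext (toggle_toggle x.1 (Finset.nonempty_iff_ne_empty.2 x.2.2.1))
  right_inv x := Subtype.ext (toggle_toggle x.1 (Finset.nonempty_iff_ne_empty.2 x.2.2.1))

noncomputable def fixCountEquiv (hn : 1 ≤ n) (Q : ℕ → Prop) :
    {π : Overpartition n // π.overParts.Nonempty ∧ Jset π = ∅ ∧ Q (ell π)} ≃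
      {p : n.Partition // Q (p.parts.count (sInf {x | x ∈ p.parts}) - 1)} :=
  (Equiv.subtypeEquivRight (fun π => by tauto)).trans <|
    ((Equiv.subtypeSubtypeEquivSubtypeInter
        (fun π : Overpartition n => π.overParts.Nonempty ∧ Jset π = ∅)
        (fun π => Q (ell π))).symm.trans <|
      (fixEquiv hn).subtypeEquiv (fun x => by rw [fixEquiv_count hn x]; simp))

end Overpartition

theorem stmt_12 (n : ℕ) (hn : 1 ≤ n) :
    (Nat.card {π : Overpartition n // π.overParts.Nonempty ∧
        Even (Multiset.card (π.plain.filter (fun x => ∃ y ∈ π.overParts, x ≤ y)))} : ℤ) -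
      Nat.card {π : Overpartition n // π.overParts.Nonempty ∧
        Odd (Multiset.card (π.plain.filter (fun x => ∃ y ∈ π.overParts, x ≤ y)))} =
    (Nat.card {p : n.Partition //
        Odd (p.parts.count (sInf {x | x ∈ p.parts}))} : ℤ) -
      Nat.card {p : n.Partition //
        Even (p.parts.count (sInf {x | x ∈ p.parts}))} := by
  classical
  open Overpartition in
  have hA := card_split (n := n) (fun π => Even (ell π))
  have hC := card_split (n := n) (fun π => Odd (ell π))
  have hbd : Nat.card {π : Overpartition n // π.overParts.Nonempty ∧ Jset π ≠ ∅ ∧ Even (ell π)}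
      = Nat.card {π : Overpartition n // π.overParts.Nonempty ∧ Jset π ≠ ∅ ∧ Odd (ell π)} :=
    Nat.card_congr togEquiv
  have hcount : ∀ p : n.Partition, 1 ≤ p.parts.count (sInf {x | x ∈ p.parts}) := by
    intro p
    rw [Nat.one_le_iff_ne_zero, Ne, Multiset.count_eq_zero, not_not]
    exact sp_mem hn p
  have ha : Nat.card {π : Overpartition n // π.overParts.Nonempty ∧ Jset π = ∅ ∧ Even (ell π)}
      = Nat.card {p : n.Partition // Odd (p.parts.count (sInf {x | x ∈ p.parts}))} := by
    rw [Nat.card_congr (fixCountEquiv hn Even)]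
    apply Nat.card_congr
    apply Equiv.subtypeEquivRight
    intro p
    have := hcount p
    rw [Nat.even_iff, Nat.odd_iff]
    omega
  have hc : Nat.card {π : Overpartition n // π.overParts.Nonempty ∧ Jset π = ∅ ∧ Odd (ell π)}
      = Nat.card {p : n.Partition // Even (p.parts.count (sInf {x | x ∈ p.parts}))} := by
    rw [Nat.card_congr (fixCountEquiv hn Odd)]
    apply Nat.card_congr
    apply Equiv.subtypeEquivRight
    intro p
    have := hcount p
    rw [Nat.even_iff, Nat.odd_iff]
    omega
  show (Nat.card {π : Overpartition n // π.overParts.Nonempty ∧ Even (ell π)} : ℤ)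
      - Nat.card {π : Overpartition n // π.overParts.Nonempty ∧ Odd (ell π)} = _
  rw [hA, hC, ← ha, ← hc]
  push_cast
  omega
end

section
/- For n ≥ 1, the signed count over all overpartitions π of n, weighted by (-1)^{ℓ_{N≤O}(π)} (counting all non-overlined parts when no overlined part exists), equals 2·(p''_o(n) - p''_e(n)), where p''_o(n) (resp. p''_e(n)) counts partitions of n in which the smallest part appears an odd (resp. even) number of times and the number of parts strictly greater than the smallest part is odd. -/
open scoped Classical

/-- Number of non-overlined parts of size at most the largest overlined part;
all non-overlined parts count if there is no overlined part. -/
noncomputable def lNleO {n : ℕ} (π : Overpartition n) : ℕ :=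
  if π.overParts = ∅ then Multiset.card π.plain
  else Multiset.card (π.plain.filter (fun x => ∃ y ∈ π.overParts, x ≤ y))

namespace OPAux

variable {n : ℕ}

theorem op_ext {π ρ : Overpartition n} (h1 : π.overParts = ρ.overParts)
    (h2 : π.plain = ρ.plain) : π = ρ := by
  cases π; cases ρ; simp_all

theorem over_sum_eq (π : Overpartition n) : (∑ x ∈ π.overParts, x) = π.overParts.val.sum := by
  rw [Finset.sum]
  congr 1
  exact Multiset.map_id' _

/-- The underlying plain partition of an overpartition. -/
def totalPart (π : Overpartition n) : n.Partition where
  parts := π.overParts.val + π.plain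
  parts_pos := by
    intro i hi
    rcases Multiset.mem_add.1 hi with h | h
    · exact π.over_pos i h
    · exact π.plain_pos i h
  parts_sum := by
    rw [Multiset.sum_add, ← over_sum_eq]
    exact π.sum_eq

theorem encode_aux (π : Overpartition n) : ∀ x ∈ π.overParts, x < n + 1 := by
  intro x hx
  have h1 : x ≤ ∑ y ∈ π.overParts, y :=
    Finset.single_le_sum (fun i _ => Nat.zero_le i) hx
  have h2 : (∑ y ∈ π.overParts, y) ≤ n := by
    have := π.sum_eq
    omega
  omega

noncomputable def encode (π : Overpartition n) : n.Partition × Finset (Fin (n + 1)) :=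
  (totalPart π, π.overParts.attachFin (encode_aux π))

theorem encode_inj : Function.Injective (encode (n := n)) := by
  intro π ρ h
  have h2 : π.overParts.attachFin (encode_aux π) = ρ.overParts.attachFin (encode_aux ρ) :=
    congrArg Prod.snd h
  have hover : π.overParts = ρ.overParts := by
    ext x
    constructor
    · intro hx
      have : (⟨x, encode_aux π x hx⟩ : Fin (n+1)) ∈ ρ.overParts.attachFin (encode_aux ρ) := by
        rw [← h2]; simp [Finset.mem_attachFin, hx]
      simpa [Finset.mem_attachFin] using this
    · intro hx
      have : (⟨x, encode_aux ρ x hx⟩ : Fin (n+1)) ∈ π.overParts.attachFin (encode_aux π) := by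
        rw [h2]; simp [Finset.mem_attachFin, hx]
      simpa [Finset.mem_attachFin] using this
  have h1 : (totalPart π).parts = (totalPart ρ).parts :=
    congrArg Nat.Partition.parts (congrArg Prod.fst h)
  have hplain : π.plain = ρ.plain := by
    have : π.overParts.val + π.plain = ρ.overParts.val + ρ.plain := h1
    rw [hover] at this
    exact add_left_cancel this
  exact op_ext hover hplain

noncomputable instance : Fintype (Overpartition n) :=
  Fintype.ofInjective encode encode_inj


/-- The largest overlined part (0 if none). -/
def M (π : Overpartition n) : ℕ := π.overParts.sup id

theorem M_mem {π : Overpartition n} (h : π.overParts.Nonempty) : M π ∈ π.overParts := by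
  obtain ⟨b, hb, hbe⟩ := Finset.exists_mem_eq_sup π.overParts h id
  rw [M, hbe]; exact hb

theorem le_M {π : Overpartition n} {x : ℕ} (hx : x ∈ π.overParts) : x ≤ M π :=
  Finset.le_sup (f := id) hx

/-- The set of candidate sizes to toggle. -/
def mvSet (π : Overpartition n) : Set ℕ :=
  {k | k < M π ∧ (k ∈ π.overParts ∨ k ∈ π.plain)}

def Mvbl (π : Overpartition n) : Prop := (mvSet π).Nonempty

theorem over_ne_of_mvbl {π : Overpartition n} (h : Mvbl π) : π.overParts ≠ ∅ := by
  intro he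
  obtain ⟨k, hk, _⟩ := h
  rw [M, he] at hk
  simp at hk

theorem lNleO_eq_M {π : Overpartition n} (h : π.overParts ≠ ∅) :
    lNleO π = Multiset.card (π.plain.filter (fun x => x ≤ M π)) := by
  rw [lNleO, if_neg h]
  congr 1
  apply Multiset.filter_congr
  intro x _
  constructor
  · rintro ⟨y, hy, hxy⟩
    exact hxy.trans (le_M hy)
  · intro hx
    exact ⟨M π, M_mem (Finset.nonempty_iff_ne_empty.2 h), hx⟩

noncomputable def K (π : Overpartition n) : ℕ := sInf (mvSet π)

theorem K_mem {π : Overpartition n} (h : Mvbl π) : K π ∈ mvSet π := Nat.sInf_mem h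

theorem K_min {π : Overpartition n} {x : ℕ} (hx : x ∈ mvSet π) : K π ≤ x := Nat.sInf_le hx

theorem K_pos {π : Overpartition n} (h : Mvbl π) : 0 < K π := by
  rcases (K_mem h).2 with h1 | h1
  · exact π.over_pos _ h1
  · exact π.plain_pos _ h1

/-- The sign-reversing involution on movable overpartitions. -/
noncomputable def iota (π : Overpartition n) (h : Mvbl π) : Overpartition n :=
  if hk : K π ∈ π.overParts then
    { overParts := π.overParts.erase (K π)
      plain := K π ::ₘ π.plain
      over_pos := fun x hx => π.over_pos x (Finset.mem_of_mem_erase hx)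
      plain_pos := by
        intro x hx
        rcases Multiset.mem_cons.1 hx with rfl | hx
        · exact π.over_pos _ hk
        · exact π.plain_pos x hx
      sum_eq := by
        have h1 := Finset.sum_erase_add π.overParts id hk
        have h2 := π.sum_eq
        rw [Multiset.sum_cons]
        simp only [id] at h1
        omega }
  else
    { overParts := insert (K π) π.overParts
      plain := π.plain.erase (K π)
      over_pos := by
        intro x hx
        rcases Finset.mem_insert.1 hx with rfl | hx
        · exact K_pos h
        · exact π.over_pos x hx
      plain_pos := fun x hx => π.plain_pos x (Multiset.mem_of_mem_erase hx)
      sum_eq := by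
        have hkp : K π ∈ π.plain := (K_mem h).2.resolve_left hk
        have h1 : (∑ x ∈ insert (K π) π.overParts, x) = K π + ∑ x ∈ π.overParts, x :=
          Finset.sum_insert hk
        have h2 : π.plain.sum = K π + (π.plain.erase (K π)).sum := by
          conv_lhs => rw [← Multiset.cons_erase hkp]
          rw [Multiset.sum_cons]
        have h3 := π.sum_eq
        omega }


theorem iota_pos {π : Overpartition n} (h : Mvbl π) (hk : K π ∈ π.overParts) :
    (iota π h).overParts = π.overParts.erase (K π) ∧ (iota π h).plain = K π ::ₘ π.plain := by
  rw [iota, dif_pos hk]; exact ⟨rfl, rfl⟩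

theorem iota_neg {π : Overpartition n} (h : Mvbl π) (hk : K π ∉ π.overParts) :
    (iota π h).overParts = insert (K π) π.overParts ∧ (iota π h).plain = π.plain.erase (K π) := by
  rw [iota, dif_neg hk]; exact ⟨rfl, rfl⟩

theorem M_iota {π : Overpartition n} (h : Mvbl π) : M (iota π h) = M π := by
  have hne : π.overParts.Nonempty := Finset.nonempty_iff_ne_empty.2 (over_ne_of_mvbl h)
  have hKlt : K π < M π := (K_mem h).1
  by_cases hk : K π ∈ π.overParts
  · show (iota π h).overParts.sup id = M π
    rw [(iota_pos h hk).1]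
    apply le_antisymm
    · exact Finset.sup_mono (Finset.erase_subset _ _)
    · exact Finset.le_sup (f := id) (Finset.mem_erase.2 ⟨Nat.ne_of_gt hKlt, M_mem hne⟩)
  · show (iota π h).overParts.sup id = M π
    rw [(iota_neg h hk).1, Finset.sup_insert]
    show K π ⊔ π.overParts.sup id = M π
    exact sup_eq_right.2 hKlt.le

theorem mvSet_iota {π : Overpartition n} (h : Mvbl π) : mvSet (iota π h) = mvSet π := by
  ext x
  simp only [mvSet, Set.mem_setOf_eq, M_iota h]
  refine and_congr_right fun _ => ?_
  by_cases hk : K π ∈ π.overParts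
  · rw [(iota_pos h hk).1, (iota_pos h hk).2]
    constructor
    · rintro (hx | hx)
      · exact Or.inl (Finset.mem_of_mem_erase hx)
      · rcases Multiset.mem_cons.1 hx with rfl | hx
        · exact Or.inl hk
        · exact Or.inr hx
    · rintro (hx | hx)
      · by_cases hxK : x = K π
        · exact Or.inr (Multiset.mem_cons.2 (Or.inl hxK))
        · exact Or.inl (Finset.mem_erase.2 ⟨hxK, hx⟩)
      · exact Or.inr (Multiset.mem_cons.2 (Or.inr hx))
  · have hkp : K π ∈ π.plain := (K_mem h).2.resolve_left hk
    rw [(iota_neg h hk).1, (iota_neg h hk).2]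
    constructor
    · rintro (hx | hx)
      · rcases Finset.mem_insert.1 hx with rfl | hx
        · exact Or.inr hkp
        · exact Or.inl hx
      · exact Or.inr (Multiset.mem_of_mem_erase hx)
    · rintro (hx | hx)
      · exact Or.inl (Finset.mem_insert.2 (Or.inr hx))
      · by_cases hxK : x = K π
        · exact Or.inl (Finset.mem_insert.2 (Or.inl hxK))
        · exact Or.inr (Multiset.mem_erase_of_ne hxK |>.2 hx)

theorem Mvbl_iota {π : Overpartition n} (h : Mvbl π) : Mvbl (iota π h) := by
  rw [Mvbl, mvSet_iota h]; exact h

theorem K_iota {π : Overpartition n} (h : Mvbl π) : K (iota π h) = K π := by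
  rw [K, mvSet_iota h]
  rfl

theorem iota_iota {π : Overpartition n} (h : Mvbl π) :
    iota (iota π h) (Mvbl_iota h) = π := by
  by_cases hk : K π ∈ π.overParts
  · have h1 := iota_pos h hk
    have hk' : K (iota π h) ∉ (iota π h).overParts := by
      rw [K_iota h, h1.1]; exact Finset.notMem_erase _ _
    have h2 := iota_neg (Mvbl_iota h) hk'
    apply op_ext
    · rw [h2.1, K_iota h, h1.1, Finset.insert_erase hk]
    · rw [h2.2, K_iota h, h1.2, Multiset.erase_cons_head]
  · have hkp : K π ∈ π.plain := (K_mem h).2.resolve_left hk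
    have h1 := iota_neg h hk
    have hk' : K (iota π h) ∈ (iota π h).overParts := by
      rw [K_iota h, h1.1]; exact Finset.mem_insert_self _ _
    have h2 := iota_pos (Mvbl_iota h) hk'
    apply op_ext
    · rw [h2.1, K_iota h, h1.1, Finset.erase_insert hk]
    · rw [h2.2, K_iota h, h1.2, Multiset.cons_erase hkp]

theorem lNleO_flip {π : Overpartition n} (h : Mvbl π) :
    lNleO (iota π h) = lNleO π + 1 ∨ lNleO π = lNleO (iota π h) + 1 := by
  have hne := over_ne_of_mvbl h
  have hne' := over_ne_of_mvbl (Mvbl_iota h)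
  have hKle : K π ≤ M π := (K_mem h).1.le
  rw [lNleO_eq_M hne, lNleO_eq_M hne', M_iota h]
  by_cases hk : K π ∈ π.overParts
  · left
    rw [(iota_pos h hk).2, Multiset.filter_cons_of_pos (p := fun x => x ≤ M π) _ hKle, Multiset.card_cons]
  · right
    have hkp : K π ∈ π.plain := (K_mem h).2.resolve_left hk
    conv_lhs => rw [← Multiset.cons_erase hkp]
    rw [Multiset.filter_cons_of_pos (p := fun x => x ≤ M π) _ hKle, Multiset.card_cons, (iota_neg h hk).2]

theorem iota_ne {π : Overpartition n} (h : Mvbl π) : iota π h ≠ π := by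
  intro he
  by_cases hk : K π ∈ π.overParts
  · have := (iota_pos h hk).1
    rw [he] at this
    exact (Finset.notMem_erase (K π) π.overParts) (this ▸ hk)
  · have := (iota_neg h hk).1
    rw [he] at this
    exact hk (this ▸ Finset.mem_insert_self (K π) π.overParts)

theorem sum_mvbl_zero :
    ∑ π ∈ Finset.univ.filter (fun π : Overpartition n => Mvbl π),
      ((-1 : ℤ) ^ lNleO π) = 0 := by
  apply Finset.sum_involution
    (g := fun π hπ => iota π (Finset.mem_filter.1 hπ).2)
  · intro π hπ
    rcases lNleO_flip (Finset.mem_filter.1 hπ).2 with h1 | h1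
    · rw [h1, pow_succ]; ring
    · rw [h1, pow_succ]; ring
  · intro π hπ _
    exact iota_ne _
  · intro π hπ
    exact iota_iota _
  · intro π hπ
    exact Finset.mem_filter.2 ⟨Finset.mem_univ _, Mvbl_iota _⟩


/-! ### partition side -/

noncomputable def minP (p : n.Partition) : ℕ := sInf {x | x ∈ p.parts}

theorem parts_nonempty (hn : 1 ≤ n) (p : n.Partition) : {x | x ∈ p.parts}.Nonempty := by
  have : p.parts ≠ 0 := by
    intro h
    have := p.parts_sum
    rw [h] at this
    simp at this
    omega
  obtain ⟨a, ha⟩ := Multiset.exists_mem_of_ne_zero this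
  exact ⟨a, ha⟩

theorem minP_mem (hn : 1 ≤ n) (p : n.Partition) : minP p ∈ p.parts :=
  Nat.sInf_mem (parts_nonempty hn p)

theorem minP_le {p : n.Partition} {x : ℕ} (hx : x ∈ p.parts) : minP p ≤ x :=
  Nat.sInf_le hx

/-- On non-movable overpartitions with nonempty over, over is the singleton of its max. -/
theorem over_eq_singleton {π : Overpartition n} (hne : π.overParts ≠ ∅) (hnm : ¬ Mvbl π) :
    π.overParts = {M π} := by
  ext x
  simp only [Finset.mem_singleton]
  constructor
  · intro hx
    rcases lt_or_eq_of_le (le_M hx) with hlt | he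
    · exact absurd ⟨x, hlt, Or.inl hx⟩ hnm
    · exact he
  · rintro rfl
    exact M_mem (Finset.nonempty_iff_ne_empty.2 hne)

theorem plain_ge {π : Overpartition n} (hnm : ¬ Mvbl π) {x : ℕ} (hx : x ∈ π.plain) :
    M π ≤ x := by
  by_contra hlt
  exact hnm ⟨x, lt_of_not_ge hlt, Or.inr hx⟩

theorem totalPart_parts {π : Overpartition n} (hne : π.overParts ≠ ∅) (hnm : ¬ Mvbl π) :
    (totalPart π).parts = M π ::ₘ π.plain := by
  show π.overParts.val + π.plain = M π ::ₘ π.plain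
  rw [over_eq_singleton hne hnm]
  rw [Finset.singleton_val, Multiset.singleton_add]

theorem minP_totalPart (hn : 1 ≤ n) {π : Overpartition n} (hne : π.overParts ≠ ∅)
    (hnm : ¬ Mvbl π) : minP (totalPart π) = M π := by
  apply le_antisymm
  · apply Nat.sInf_le
    show M π ∈ (totalPart π).parts
    rw [totalPart_parts hne hnm]
    exact Multiset.mem_cons_self _ _
  · have hmem := minP_mem hn (totalPart π)
    rw [totalPart_parts hne hnm] at hmem
    rcases Multiset.mem_cons.1 hmem with he | hmem
    · exact le_of_eq he.symm
    · exact plain_ge hnm hmem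

theorem lNleO_count {π : Overpartition n} (hne : π.overParts ≠ ∅) (hnm : ¬ Mvbl π) :
    lNleO π = π.plain.count (M π) := by
  rw [lNleO_eq_M hne]
  have : π.plain.filter (fun x => x ≤ M π) = π.plain.filter (fun x => M π = x) := by
    apply Multiset.filter_congr
    intro x hx
    have h1 := plain_ge hnm hx
    constructor
    · intro h2; omega
    · intro h2; omega
  rw [this, ← Multiset.countP_eq_card_filter]
  rfl

/-- Partition viewed as overpartition with no overlines. -/
def ofPartition (p : n.Partition) : Overpartition n where
  overParts := ∅
  plain := p.parts
  over_pos := by simp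
  plain_pos := fun x hx => p.parts_pos hx
  sum_eq := by simpa using p.parts_sum

/-- Fixed-point overpartition attached to a partition. -/
noncomputable def toOP (hn : 1 ≤ n) (p : n.Partition) : Overpartition n where
  overParts := {minP p}
  plain := p.parts.erase (minP p)
  over_pos := by
    intro x hx
    rw [Finset.mem_singleton] at hx
    subst hx
    exact p.parts_pos (minP_mem hn p)
  plain_pos := fun x hx => p.parts_pos (Multiset.mem_of_mem_erase hx)
  sum_eq := by
    rw [Finset.sum_singleton]
    have h1 : minP p ::ₘ p.parts.erase (minP p) = p.parts :=
      Multiset.cons_erase (minP_mem hn p)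
    have h2 : (minP p ::ₘ p.parts.erase (minP p)).sum = n := by
      rw [h1]; exact p.parts_sum
    rw [Multiset.sum_cons] at h2
    exact h2

theorem M_toOP (hn : 1 ≤ n) (p : n.Partition) : M (toOP hn p) = minP p := by
  show Finset.sup {minP p} id = minP p
  rw [Finset.sup_singleton]
  rfl

theorem toOP_mem (hn : 1 ≤ n) (p : n.Partition) :
    ¬ (toOP hn p).overParts = ∅ ∧ ¬ Mvbl (toOP hn p) := by
  constructor
  · simp [toOP]
  · rintro ⟨k, hkM, hk⟩
    rw [M_toOP hn p] at hkM
    rcases hk with hk | hk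
    · rw [show (toOP hn p).overParts = {minP p} from rfl, Finset.mem_singleton] at hk
      omega
    · have hk2 : k ∈ p.parts.erase (minP p) := hk
      have := minP_le (Multiset.mem_of_mem_erase hk2)
      omega

/-- A0 bijection: overpartitions with empty over sum. -/
theorem sum_A0 :
    ∑ π ∈ Finset.univ.filter (fun π : Overpartition n => π.overParts = ∅),
      ((-1 : ℤ) ^ lNleO π) =
    ∑ p : n.Partition, (-1 : ℤ) ^ (Multiset.card p.parts) := by
  refine Finset.sum_bij'
    (fun π hπ => (⟨π.plain, fun hx => π.plain_pos _ hx, by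
      have h1 := π.sum_eq
      have h2 : π.overParts = ∅ := (Finset.mem_filter.1 hπ).2
      rw [h2] at h1
      simpa using h1⟩ : n.Partition))
    (fun p _ => ofPartition p)
    (fun π hπ => Finset.mem_univ _) ?_ ?_ ?_ ?_
  · intro p hp
    refine Finset.mem_filter.2 ⟨Finset.mem_univ _, rfl⟩
  · intro π hπ
    refine op_ext ?_ rfl
    exact (Finset.mem_filter.1 hπ).2.symm
  · intro p hp
    exact Nat.Partition.ext rfl
  · intro π hπ
    simp only [lNleO, if_pos (Finset.mem_filter.1 hπ).2]

/-- A1 bijection: fixed overpartitions vs all partitions. -/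
theorem sum_A1 (hn : 1 ≤ n) :
    ∑ π ∈ Finset.univ.filter
        (fun π : Overpartition n => ¬ π.overParts = ∅ ∧ ¬ Mvbl π),
      ((-1 : ℤ) ^ lNleO π) =
    ∑ p : n.Partition, (-1 : ℤ) ^ (p.parts.count (minP p) + 1) := by
  refine Finset.sum_bij'
    (fun π _ => totalPart π)
    (fun p _ => toOP hn p)
    (fun π _ => Finset.mem_univ _) ?_ ?_ ?_ ?_
  · intro p hp
    exact Finset.mem_filter.2 ⟨Finset.mem_univ _, toOP_mem hn p⟩
  · intro π hπ
    obtain ⟨-, hne, hnm⟩ := Finset.mem_filter.1 hπ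
    apply op_ext
    · show {minP (totalPart π)} = π.overParts
      rw [minP_totalPart hn hne hnm, over_eq_singleton hne hnm]
    · show (totalPart π).parts.erase (minP (totalPart π)) = π.plain
      rw [minP_totalPart hn hne hnm, totalPart_parts hne hnm,
        Multiset.erase_cons_head]
  · intro p hp
    apply Nat.Partition.ext
    show ({minP p} : Finset ℕ).val + p.parts.erase (minP p) = p.parts
    rw [Finset.singleton_val, Multiset.singleton_add,
      Multiset.cons_erase (minP_mem hn p)]
  · intro π hπ
    obtain ⟨-, hne, hnm⟩ := Finset.mem_filter.1 hπ
    rw [lNleO_count hne hnm, minP_totalPart hn hne hnm, totalPart_parts hne hnm,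
      Multiset.count_cons_self]
    rw [pow_add, pow_add]
    simp


theorem sum_total (hn : 1 ≤ n) :
    ∑ π : Overpartition n, ((-1 : ℤ) ^ lNleO π) =
    ∑ p : n.Partition, ((-1 : ℤ) ^ (Multiset.card p.parts)
      + (-1 : ℤ) ^ (p.parts.count (minP p) + 1)) := by
  have h0 := Finset.sum_filter_add_sum_filter_not Finset.univ
    (fun π : Overpartition n => π.overParts = ∅) (fun π => (-1 : ℤ) ^ lNleO π)
  have h1 := Finset.sum_filter_add_sum_filter_not
    (Finset.univ.filter (fun π : Overpartition n => ¬ π.overParts = ∅))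
    (fun π => Mvbl π) (fun π => (-1 : ℤ) ^ lNleO π)
  have h2 : (Finset.univ.filter (fun π : Overpartition n => ¬ π.overParts = ∅)).filter
      (fun π => Mvbl π) = Finset.univ.filter (fun π : Overpartition n => Mvbl π) := by
    rw [Finset.filter_filter]
    apply Finset.filter_congr
    intro x _
    constructor
    · exact fun h => h.2
    · exact fun h => ⟨over_ne_of_mvbl h, h⟩
  have h3 : (Finset.univ.filter (fun π : Overpartition n => ¬ π.overParts = ∅)).filter
      (fun π => ¬ Mvbl π) =
      Finset.univ.filter (fun π : Overpartition n => ¬ π.overParts = ∅ ∧ ¬ Mvbl π) := by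
    rw [Finset.filter_filter]
  rw [h2, h3, sum_mvbl_zero, sum_A1 hn, zero_add] at h1
  rw [← h0, ← h1, sum_A0, ← Finset.sum_add_distrib]

theorem card_parts_eq (hn : 1 ≤ n) (p : n.Partition) :
    Multiset.card p.parts = p.parts.count (minP p)
      + Multiset.card (p.parts.filter (fun x => minP p < x)) := by
  have h0 := Multiset.filter_add_not (fun x => minP p < x) p.parts
  have h1 : p.parts.filter (fun x => ¬ minP p < x)
      = p.parts.filter (fun x => minP p = x) := by
    apply Multiset.filter_congr
    intro x hx
    have := minP_le hx
    constructor
    · intro h2; omega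
    · intro h2; omega
  have h2 : p.parts.count (minP p)
      = Multiset.card (p.parts.filter (fun x => minP p = x)) := by
    rw [← Multiset.countP_eq_card_filter]
    rfl
  have h3 := congrArg Multiset.card h0
  rw [Multiset.card_add] at h3
  rw [h2, ← h1]
  omega

theorem pointwise (hn : 1 ≤ n) (p : n.Partition) :
    (-1 : ℤ) ^ (Multiset.card p.parts) + (-1 : ℤ) ^ (p.parts.count (minP p) + 1) =
    2 * (if Odd (p.parts.count (minP p))
            ∧ Odd (Multiset.card (p.parts.filter (fun x => minP p < x))) then (1 : ℤ)
         else if Even (p.parts.count (minP p))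
            ∧ Odd (Multiset.card (p.parts.filter (fun x => minP p < x))) then -1
         else 0) := by
  rw [card_parts_eq hn p]
  set c := p.parts.count (minP p) with hc'
  set g := Multiset.card (p.parts.filter (fun x => minP p < x)) with hg'
  rcases Nat.even_or_odd c with hc | hc <;> rcases Nat.even_or_odd g with hg | hg
  · rw [(hc.add hg).neg_one_pow, hc.add_one.neg_one_pow,
      if_neg (fun h => (Nat.not_odd_iff_even.mpr hg) h.2),
      if_neg (fun h => (Nat.not_odd_iff_even.mpr hg) h.2)]
    ring
  · rw [(hc.add_odd hg).neg_one_pow, hc.add_one.neg_one_pow,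
      if_neg (fun h => (Nat.not_odd_iff_even.mpr hc) h.1),
      if_pos ⟨hc, hg⟩]
    ring
  · rw [(hc.add_even hg).neg_one_pow, hc.add_one.neg_one_pow,
      if_neg (fun h => (Nat.not_odd_iff_even.mpr hg) h.2),
      if_neg (fun h => (Nat.not_odd_iff_even.mpr hg) h.2)]
    ring
  · rw [(hc.add_odd hg).neg_one_pow, hc.add_one.neg_one_pow,
      if_pos ⟨hc, hg⟩]
    ring

theorem sum_h (hn : 1 ≤ n) :
    ∑ p : n.Partition,
      (if Odd (p.parts.count (minP p))
          ∧ Odd (Multiset.card (p.parts.filter (fun x => minP p < x))) then (1 : ℤ)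
       else if Even (p.parts.count (minP p))
          ∧ Odd (Multiset.card (p.parts.filter (fun x => minP p < x))) then -1
       else 0) =
    ((Finset.univ.filter (fun p : n.Partition => Odd (p.parts.count (minP p))
        ∧ Odd (Multiset.card (p.parts.filter (fun x => minP p < x))))).card : ℤ)
    - ((Finset.univ.filter (fun p : n.Partition => Even (p.parts.count (minP p))
        ∧ Odd (Multiset.card (p.parts.filter (fun x => minP p < x))))).card : ℤ) := by
  classical
  set P1 := fun p : n.Partition => Odd (p.parts.count (minP p))
      ∧ Odd (Multiset.card (p.parts.filter (fun x => minP p < x))) with hP1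
  set P2 := fun p : n.Partition => Even (p.parts.count (minP p))
      ∧ Odd (Multiset.card (p.parts.filter (fun x => minP p < x))) with hP2
  rw [← Finset.sum_filter_add_sum_filter_not Finset.univ P1]
  have e1 : ∑ p ∈ Finset.univ.filter P1,
      (if P1 p then (1 : ℤ) else if P2 p then -1 else 0)
      = (Finset.univ.filter P1).card := by
    rw [Finset.sum_congr rfl (fun x hx => if_pos (Finset.mem_filter.1 hx).2)]
    simp
  have e2 : ∑ p ∈ Finset.univ.filter (fun p => ¬ P1 p),
      (if P1 p then (1 : ℤ) else if P2 p then -1 else 0)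
      = -((Finset.univ.filter P2).card : ℤ) := by
    rw [Finset.sum_congr rfl
      (fun x hx => if_neg (Finset.mem_filter.1 hx).2)]
    rw [← Finset.sum_filter]
    rw [Finset.filter_filter]
    have : Finset.univ.filter (fun p : n.Partition => ¬ P1 p ∧ P2 p)
        = Finset.univ.filter P2 := by
      apply Finset.filter_congr
      intro x _
      constructor
      · exact fun h => h.2
      · intro h
        exact ⟨fun h1 => (Nat.not_odd_iff_even.mpr h.1) h1.1, h⟩
    rw [this]
    simp
  rw [e1, e2]
  ring

theorem lhs_eq (m : ℕ) :
    (Nat.card {π : Overpartition m // Even (lNleO π)} : ℤ) -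
      Nat.card {π : Overpartition m // Odd (lNleO π)} =
    ∑ π : Overpartition m, ((-1 : ℤ) ^ lNleO π) := by
  classical
  rw [Nat.card_eq_fintype_card, Nat.card_eq_fintype_card,
    Fintype.card_subtype, Fintype.card_subtype]
  rw [← Finset.sum_filter_add_sum_filter_not Finset.univ
    (fun π : Overpartition m => Even (lNleO π)) (fun π => (-1 : ℤ) ^ lNleO π)]
  have e1 : ∑ π ∈ Finset.univ.filter (fun π : Overpartition m => Even (lNleO π)),
      ((-1 : ℤ) ^ lNleO π)
      = (Finset.univ.filter (fun π : Overpartition m => Even (lNleO π))).card := by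
    rw [Finset.sum_congr rfl
      (fun x hx => ((Finset.mem_filter.1 hx).2).neg_one_pow)]
    simp
  have e2 : ∑ π ∈ Finset.univ.filter (fun π : Overpartition m => ¬ Even (lNleO π)),
      ((-1 : ℤ) ^ lNleO π)
      = -((Finset.univ.filter (fun π : Overpartition m => Odd (lNleO π))).card : ℤ) := by
    have hfe : Finset.univ.filter (fun π : Overpartition m => ¬ Even (lNleO π))
        = Finset.univ.filter (fun π : Overpartition m => Odd (lNleO π)) := by
      apply Finset.filter_congr
      intro x _
      exact (Nat.not_even_iff_odd.symm).symm
    rw [hfe]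
    rw [Finset.sum_congr rfl
      (fun x hx => ((Finset.mem_filter.1 hx).2).neg_one_pow)]
    simp
  rw [e1, e2]
  ring

end OPAux

theorem stmt_13 (n : ℕ) (hn : 1 ≤ n) :
    (Nat.card {π : Overpartition n // Even (lNleO π)} : ℤ) -
      Nat.card {π : Overpartition n // Odd (lNleO π)} =
    2 * ((Nat.card {p : n.Partition //
            Odd (p.parts.count (sInf {x | x ∈ p.parts})) ∧
            Odd (Multiset.card
              (p.parts.filter (fun x => sInf {x | x ∈ p.parts} < x)))} : ℤ) -
          Nat.card {p : n.Partition //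
            Even (p.parts.count (sInf {x | x ∈ p.parts})) ∧
            Odd (Multiset.card
              (p.parts.filter (fun x => sInf {x | x ∈ p.parts} < x)))}) := by
  classical
  have hA : (Nat.card {p : n.Partition //
      Odd (p.parts.count (sInf {x | x ∈ p.parts})) ∧
      Odd (Multiset.card
        (p.parts.filter (fun x => sInf {x | x ∈ p.parts} < x)))} : ℤ)
      = ((Finset.univ.filter (fun p : n.Partition =>
          Odd (p.parts.count (OPAux.minP p)) ∧
          Odd (Multiset.card
            (p.parts.filter (fun x => OPAux.minP p < x))))).card : ℤ) := by
    rw [Nat.card_eq_fintype_card, Fintype.card_subtype]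
    norm_num
    congr 1
  have hB : (Nat.card {p : n.Partition //
      Even (p.parts.count (sInf {x | x ∈ p.parts})) ∧
      Odd (Multiset.card
        (p.parts.filter (fun x => sInf {x | x ∈ p.parts} < x)))} : ℤ)
      = ((Finset.univ.filter (fun p : n.Partition =>
          Even (p.parts.count (OPAux.minP p)) ∧
          Odd (Multiset.card
            (p.parts.filter (fun x => OPAux.minP p < x))))).card : ℤ) := by
    rw [Nat.card_eq_fintype_card, Fintype.card_subtype]
    norm_num
    congr 1
  rw [hA, hB, OPAux.lhs_eq n, OPAux.sum_total hn,
    Finset.sum_congr rfl (fun p _ => OPAux.pointwise hn p),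
    ← Finset.mul_sum, OPAux.sum_h hn]
end

section
/- For every n ≥ 1, among overpartitions of n containing at least one non-overlined part, the number with ℓ_{O≥N} even (resp. odd) equals the number with ℓ_{O≤N} even (resp. odd), where ℓ_{O≥N} counts overlined parts of size ≥ the smallest non-overlined part and ℓ_{O≤N} counts overlined parts of size ≤ the largest non-overlined part. -/
open scoped Classical

section Core
variable {α : Type*} [LinearOrder α]

noncomputable def nstat (S : Finset α) (M : Multiset α) : ℕ :=
  (S.filter (fun x => ∃ y ∈ M, y ≤ x)).card

def IsFix (S : Finset α) (M : Multiset α) : Prop :=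
  Multiset.card M = 1 ∧ nstat S M = 0

noncomputable def mmin (M : Multiset α) (hM : M ≠ 0) : α :=
  M.toFinset.min' (by simpa using hM)

lemma mmin_mem (M : Multiset α) (hM : M ≠ 0) : mmin M hM ∈ M :=
  Multiset.mem_toFinset.1 (Finset.min'_mem _ _)

lemma mmin_le (M : Multiset α) (hM : M ≠ 0) {y : α} (hy : y ∈ M) : mmin M hM ≤ y :=
  Finset.min'_le _ _ (Multiset.mem_toFinset.2 hy)

lemma mmin_eq (M : Multiset α) (hM : M ≠ 0) (m : α) (h1 : m ∈ M)
    (h2 : ∀ y ∈ M, m ≤ y) : mmin M hM = m :=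
  le_antisymm (mmin_le M hM h1) (h2 _ (mmin_mem M hM))

lemma exists_le_iff (M : Multiset α) (hM : M ≠ 0) (x : α) :
    (∃ y ∈ M, y ≤ x) ↔ mmin M hM ≤ x :=
  ⟨fun ⟨_, hy, hle⟩ => le_trans (mmin_le M hM hy) hle,
   fun h => ⟨mmin M hM, mmin_mem M hM, h⟩⟩

lemma nstat_eq (S : Finset α) (M : Multiset α) (hM : M ≠ 0) :
    nstat S M = (S.filter (fun x => mmin M hM ≤ x)).card := by
  unfold nstat
  congr 1
  apply Finset.filter_congr
  intro x _
  simp [exists_le_iff M hM x]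

noncomputable def tog (S : Finset α) (M : Multiset α) : Finset α × Multiset α :=
  if hM : M = 0 then (S, M)
  else if hc : (S.filter (fun x => mmin M hM ≤ x)).Nonempty ∧
      (S.filter (fun x => mmin M hM ≤ x)).min ≤ (M.erase (mmin M hM)).toFinset.min then
    (S.erase ((S.filter (fun x => mmin M hM ≤ x)).min' hc.1),
      ((S.filter (fun x => mmin M hM ≤ x)).min' hc.1) ::ₘ M)
  else if ha : ((M.erase (mmin M hM)).toFinset).Nonempty then
    (insert ((M.erase (mmin M hM)).toFinset.min' ha) S,
      M.erase ((M.erase (mmin M hM)).toFinset.min' ha))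
  else (S, M)

lemma tog_eq1 (S : Finset α) (M : Multiset α) (hM : M ≠ 0)
    (hc : (S.filter (fun x => mmin M hM ≤ x)).Nonempty ∧
      (S.filter (fun x => mmin M hM ≤ x)).min ≤ (M.erase (mmin M hM)).toFinset.min) :
    tog S M = (S.erase ((S.filter (fun x => mmin M hM ≤ x)).min' hc.1),
      ((S.filter (fun x => mmin M hM ≤ x)).min' hc.1) ::ₘ M) := by
  rw [tog, dif_neg hM, dif_pos hc]

lemma tog_eq2 (S : Finset α) (M : Multiset α) (hM : M ≠ 0)
    (hc : ¬ ((S.filter (fun x => mmin M hM ≤ x)).Nonempty ∧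
      (S.filter (fun x => mmin M hM ≤ x)).min ≤ (M.erase (mmin M hM)).toFinset.min))
    (ha : ((M.erase (mmin M hM)).toFinset).Nonempty) :
    tog S M = (insert ((M.erase (mmin M hM)).toFinset.min' ha) S,
      M.erase ((M.erase (mmin M hM)).toFinset.min' ha)) := by
  rw [tog, dif_neg hM, dif_neg hc, dif_pos ha]

theorem tog_spec (S : Finset α) (M : Multiset α) (hM : M ≠ 0) (hnf : ¬ IsFix S M) :
    (tog S M).1.val + (tog S M).2 = S.val + M ∧
    (tog S M).2 ≠ 0 ∧
    ¬ IsFix (tog S M).1 (tog S M).2 ∧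
    (nstat (tog S M).1 (tog S M).2 = nstat S M + 1 ∨
      nstat S M = nstat (tog S M).1 (tog S M).2 + 1) ∧
    tog (tog S M).1 (tog S M).2 = (S, M) := by
  by_cases hc : (S.filter (fun x => mmin M hM ≤ x)).Nonempty ∧
      (S.filter (fun x => mmin M hM ≤ x)).min ≤ (M.erase (mmin M hM)).toFinset.min
  · -- CASE 1 : move b₀ from S to M
    rw [tog_eq1 S M hM hc]
    set m := mmin M hM with hm
    set Sf := S.filter (fun x => m ≤ x) with hSf
    set b₀ := Sf.min' hc.1 with hb₀
    have hb₀Sf : b₀ ∈ Sf := Finset.min'_mem _ _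
    have hb₀S : b₀ ∈ S := (Finset.mem_filter.1 hb₀Sf).1
    have hmb₀ : m ≤ b₀ := (Finset.mem_filter.1 hb₀Sf).2
    have hM1 : (b₀ ::ₘ M) ≠ 0 := Multiset.cons_ne_zero
    have hm1 : mmin (b₀ ::ₘ M) hM1 = m := by
      refine mmin_eq _ _ m (Multiset.mem_cons_of_mem (mmin_mem M hM)) ?_
      intro y hy
      rcases Multiset.mem_cons.1 hy with h | h
      · exact h ▸ hmb₀
      · exact mmin_le M hM h
    have hb₀mem : b₀ ∈ (b₀ ::ₘ M).erase m := by
      by_cases hbm : b₀ = m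
      · rw [hbm, Multiset.erase_cons_head]
        exact mmin_mem M hM
      · rw [Multiset.erase_cons_tail _ hbm]
        exact Multiset.mem_cons_self _ _
    have haux : ((b₀ ::ₘ M).erase m).toFinset.min = (b₀ : WithTop α) := by
      by_cases hbm : b₀ = m
      · rw [hbm, Multiset.erase_cons_head]
        rw [← Finset.coe_min' (by simpa using hM)]
        exact congrArg _ (hbm ▸ hm.symm)
      · rw [Multiset.erase_cons_tail _ hbm, Multiset.toFinset_cons, Finset.min_insert]
        refine min_eq_left ?_
        have := hc.2
        rwa [← Finset.coe_min' hc.1] at this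
    have hSf1 : (S.erase b₀).filter (fun x => m ≤ x) = Sf.erase b₀ := by
      rw [hSf, Finset.filter_erase]
    refine ⟨?_, hM1, ?_, ?_, ?_⟩
    · -- union preserved
      rw [Finset.erase_val]
      have hv : b₀ ∈ S.val := hb₀S
      conv_rhs => rw [← Multiset.cons_erase hv]
      rw [Multiset.add_cons, Multiset.cons_add]
    · -- not fixed
      rintro ⟨h1, -⟩
      have : Multiset.card M ≠ 0 := by simpa using hM
      simp only [Multiset.card_cons] at h1
      omega
    · -- statistic decreases
      right
      rw [nstat_eq _ _ hM, nstat_eq _ _ hM1, hm1, hSf1, ← hSf]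
      rw [Finset.card_erase_add_one hb₀Sf]
    · -- involution
      have hcond2 : ¬ (((S.erase b₀).filter (fun x => mmin (b₀ ::ₘ M) hM1 ≤ x)).Nonempty ∧
          ((S.erase b₀).filter (fun x => mmin (b₀ ::ₘ M) hM1 ≤ x)).min ≤
            ((b₀ ::ₘ M).erase (mmin (b₀ ::ₘ M) hM1)).toFinset.min) := by
        rw [hm1, hSf1, haux]
        rintro ⟨hne, hle⟩
        have hx := Finset.min'_mem _ hne
        have hxb : b₀ < (Sf.erase b₀).min' hne := by
          have h1 := Finset.min'_le Sf _ (Finset.mem_of_mem_erase hx)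
          have h2 : (Sf.erase b₀).min' hne ≠ b₀ := Finset.ne_of_mem_erase hx
          exact lt_of_le_of_ne h1 (Ne.symm h2)
        rw [← Finset.coe_min' hne] at hle
        exact absurd (WithTop.coe_le_coe.1 hle) (not_le.2 hxb)
      have hane : (((b₀ ::ₘ M).erase (mmin (b₀ ::ₘ M) hM1)).toFinset).Nonempty := by
        rw [hm1]
        exact ⟨b₀, Multiset.mem_toFinset.2 hb₀mem⟩
      rw [tog_eq2 _ _ hM1 hcond2 hane]
      have ha₀ : ((b₀ ::ₘ M).erase (mmin (b₀ ::ₘ M) hM1)).toFinset.min' hane = b₀ := by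
        have : (((b₀ ::ₘ M).erase (mmin (b₀ ::ₘ M) hM1)).toFinset.min' hane : WithTop α)
            = (b₀ : WithTop α) := by
          rw [Finset.coe_min']
          rw [hm1]  -- rewrite inside min
          exact haux
        exact_mod_cast this
      rw [ha₀]
      rw [Finset.insert_erase hb₀S, Multiset.erase_cons_head]
  · -- CASE 2 or fixed
    by_cases ha : ((M.erase (mmin M hM)).toFinset).Nonempty
    · -- CASE 2 : move a₀ from M to S
      rw [tog_eq2 S M hM hc ha]
      set m := mmin M hM with hm
      set Sf := S.filter (fun x => m ≤ x) with hSf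
      set a₀ := (M.erase m).toFinset.min' ha with ha₀def
      have ha₀e : a₀ ∈ M.erase m := Multiset.mem_toFinset.1 (Finset.min'_mem _ _)
      have ha₀M : a₀ ∈ M := Multiset.mem_of_mem_erase ha₀e
      have hma₀ : m ≤ a₀ := mmin_le M hM ha₀M
      have ha₀min : ((M.erase m).toFinset).min = (a₀ : WithTop α) := (Finset.coe_min' ha).symm ▸ rfl
      have hlt : ∀ x ∈ Sf, a₀ < x := by
        intro x hx
        by_contra hxa
        push_neg at hxa
        have hne : Sf.Nonempty := ⟨x, hx⟩
        have : Sf.min ≤ ((M.erase m).toFinset).min := by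
          rw [ha₀min]
          exact le_trans (Finset.min_le hx) (WithTop.coe_le_coe.2 hxa)
        exact hc ⟨hne, this⟩
      have ha₀S : a₀ ∉ S := by
        intro hin
        have : a₀ ∈ Sf := Finset.mem_filter.2 ⟨hin, hma₀⟩
        exact absurd (hlt a₀ this) (lt_irrefl _)
      have hmM2 : m ∈ M.erase a₀ := by
        by_cases ham : a₀ = m
        · rw [ham] at ha₀e
          rwa [ham]
        · exact (Multiset.mem_erase_of_ne (fun h => ham h.symm)).2 (mmin_mem M hM)
      have hM2 : M.erase a₀ ≠ 0 := fun h => by rw [h] at hmM2; exact absurd hmM2 (Multiset.notMem_zero m)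
      have hm2 : mmin (M.erase a₀) hM2 = m :=
        mmin_eq _ _ m hmM2 (fun y hy => mmin_le M hM (Multiset.mem_of_mem_erase hy))
      have ha₀Sf : a₀ ∉ Sf := fun h => absurd (hlt _ h) (lt_irrefl _)
      have hSf2 : (insert a₀ S).filter (fun x => m ≤ x) = insert a₀ Sf := by
        rw [hSf, Finset.filter_insert, if_pos hma₀]
      have hSf2' : (insert a₀ S).filter (fun x => mmin (M.erase a₀) hM2 ≤ x) = insert a₀ Sf := by
        simp only [hm2]
        exact hSf2
      have hminins : (insert a₀ Sf).min = (a₀ : WithTop α) := by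
        rw [Finset.min_insert]
        refine min_eq_left ?_
        refine Finset.le_min ?_
        intro x hx
        exact WithTop.coe_le_coe.2 (le_of_lt (hlt x hx))
      refine ⟨?_, hM2, ?_, ?_, ?_⟩
      · rw [Finset.insert_val_of_notMem ha₀S, Multiset.cons_add, ← Multiset.add_cons,
          Multiset.cons_erase ha₀M]
      · rintro ⟨-, h2⟩
        rw [nstat_eq _ _ hM2, hSf2'] at h2
        rw [Finset.card_insert_of_notMem ha₀Sf] at h2
        simp at h2
      · left
        rw [nstat_eq _ _ hM2, nstat_eq _ _ hM, hSf2', ← hSf,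
          Finset.card_insert_of_notMem ha₀Sf]
      · have hcond : ((insert a₀ S).filter (fun x => mmin (M.erase a₀) hM2 ≤ x)).Nonempty ∧
            ((insert a₀ S).filter (fun x => mmin (M.erase a₀) hM2 ≤ x)).min ≤
              ((M.erase a₀).erase (mmin (M.erase a₀) hM2)).toFinset.min := by
          rw [hSf2', hminins]
          constructor
          · exact ⟨a₀, Finset.mem_insert_self _ _⟩
          · rw [hm2]
            refine Finset.le_min ?_
            intro x hx
            have hx' : x ∈ (M.erase m).erase a₀ := by
              rw [← Multiset.erase_comm]
              exact Multiset.mem_toFinset.1 hx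
            have : x ∈ M.erase m := Multiset.mem_of_mem_erase hx'
            exact WithTop.coe_le_coe.2 (Finset.min'_le _ _ (Multiset.mem_toFinset.2 this))
        rw [tog_eq1 _ _ hM2 hcond]
        have hb₀' : ((insert a₀ S).filter (fun x => mmin (M.erase a₀) hM2 ≤ x)).min' hcond.1 = a₀ := by
          have hcoe : (((insert a₀ S).filter (fun x => mmin (M.erase a₀) hM2 ≤ x)).min' hcond.1 :
              WithTop α) = (a₀ : WithTop α) := by
            rw [Finset.coe_min', hSf2', hminins]
          exact_mod_cast hcoe
        rw [hb₀']
        rw [Finset.erase_insert ha₀S, Multiset.cons_erase ha₀M]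
    · -- fixed: contradiction
      exfalso
      apply hnf
      push_neg at hc
      have hemp : (M.erase (mmin M hM)).toFinset = ∅ := Finset.not_nonempty_iff_eq_empty.1 ha
      have hSfe : (S.filter (fun x => mmin M hM ≤ x)) = ∅ := by
        by_contra hne
        have hne' := Finset.nonempty_iff_ne_empty.2 hne
        have h1 := hc hne'
        rw [hemp, Finset.min_empty] at h1
        exact not_top_lt h1
      have hMe : M.erase (mmin M hM) = 0 := Multiset.toFinset_eq_empty.1 hemp
      constructor
      · have : M = mmin M hM ::ₘ (M.erase (mmin M hM)) := (Multiset.cons_erase (mmin_mem M hM)).symm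
        rw [this, hMe]
        simp
      · rw [nstat_eq _ _ hM, hSfe]
        simp



lemma isfix_iff (S : Finset α) (M : Multiset α) (hM : M ≠ 0) :
    IsFix S M ↔ ∃ m, M = {m} ∧ ∀ x ∈ S, x < m := by
  constructor
  · rintro ⟨h1, h2⟩
    obtain ⟨m, hm⟩ := Multiset.card_eq_one.1 h1
    refine ⟨m, hm, fun x hx => ?_⟩
    by_contra hlt
    push_neg at hlt
    have : x ∈ S.filter (fun x => ∃ y ∈ M, y ≤ x) :=
      Finset.mem_filter.2 ⟨hx, ⟨m, by simp [hm], hlt⟩⟩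
    rw [nstat, Finset.card_eq_zero] at h2
    simp [h2] at this
  · rintro ⟨m, hm, hlt⟩
    constructor
    · simp [hm]
    · rw [nstat, Finset.card_eq_zero, Finset.filter_eq_empty_iff]
      rintro x hx ⟨y, hy, hle⟩
      rw [hm, Multiset.mem_singleton] at hy
      subst hy
      exact absurd hle (not_le.2 (hlt x hx))

lemma nstat_ne_zero_not_isfix (S : Finset α) (M : Multiset α) (h : nstat S M ≠ 0) :
    ¬ IsFix S M := fun hf => h hf.2


lemma fix_notmem {S : Finset α} {m : α} (hlt : ∀ x ∈ S, x < m) : m ∉ S :=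
  fun h => absurd (hlt m h) (lt_irrefl m)

lemma insert_lt_inj [DecidableEq α] {S₁ S₂ : Finset α} {m₁ m₂ : α}
    (h1 : ∀ x ∈ S₁, x < m₁) (h2 : ∀ x ∈ S₂, x < m₂)
    (he : insert m₁ S₁ = insert m₂ S₂) : m₁ = m₂ ∧ S₁ = S₂ := by
  have hm : m₁ = m₂ := by
    have t1 : m₁ ∈ insert m₂ S₂ := he ▸ Finset.mem_insert_self _ _
    have t2 : m₂ ∈ insert m₁ S₁ := he.symm ▸ Finset.mem_insert_self _ _
    rcases Finset.mem_insert.1 t1 with h | h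
    · exact h
    · rcases Finset.mem_insert.1 t2 with h' | h'
      · exact h'.symm
      · exact absurd (lt_trans (h2 _ h) (h1 _ h')) (lt_irrefl _)
  subst hm
  refine ⟨rfl, ?_⟩
  have e1 : S₁ = (insert m₁ S₁).erase m₁ := (Finset.erase_insert (fix_notmem h1)).symm
  rw [e1, he, Finset.erase_insert (fix_notmem h2)]

lemma maxlike_exists [DecidableEq α] (D : Finset α) (hD : D.Nonempty) :
    ∃ m ∈ D, ∀ x ∈ D.erase m, x < m :=
  ⟨D.max' hD, Finset.max'_mem _ _, fun x hx =>
    lt_of_le_of_ne (Finset.le_max' D x (Finset.mem_of_mem_erase hx))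
      (Finset.ne_of_mem_erase hx)⟩

end Core


lemma Overpartition.ext'_s18 {n : ℕ} {π₁ π₂ : Overpartition n}
    (h1 : π₁.overParts = π₂.overParts) (h2 : π₁.plain = π₂.plain) : π₁ = π₂ := by
  cases π₁; cases π₂; simp_all

lemma sum_val_id (s : Finset ℕ) : ∑ x ∈ s, x = s.val.sum := (Finset.sum_val s).symm

instance (n : ℕ) : Finite (Overpartition n) := by
  apply Finite.of_injective
    (f := fun π : Overpartition n =>
      ((⟨π.overParts.val + π.plain, fun {i} hi => by
          rcases Multiset.mem_add.1 hi with h | h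
          · exact π.over_pos i h
          · exact π.plain_pos i h, by
          rw [Multiset.sum_add, ← sum_val_id, π.sum_eq]⟩ : Nat.Partition n),
        (⟨π.overParts, by
          simp only [Finset.mem_powerset]
          intro x hx
          have hle : x ≤ ∑ y ∈ π.overParts, y :=
            Finset.single_le_sum (f := fun y => y) (fun i _ => Nat.zero_le i) hx
          have : x ≤ n := le_trans hle (le_trans (Nat.le_add_right _ _) π.sum_eq.le)
          simp [Finset.mem_range]
          omega⟩ : ((Finset.range (n+1)).powerset : Finset (Finset ℕ)))))
  rintro π₁ π₂ h
  rw [Prod.mk.injEq, Subtype.mk.injEq, Nat.Partition.mk.injEq] at h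
  obtain ⟨h1, h2⟩ := h
  refine Overpartition.ext'_s18 h2 ?_
  rw [h2] at h1
  exact add_left_cancel h1

noncomputable instance (n : ℕ) : Fintype (Overpartition n) := Fintype.ofFinite _

/-- lifted involution -/
noncomputable def togO (L : LinearOrder ℕ) {n : ℕ} (π : Overpartition n) : Overpartition n :=
  if h : π.plain ≠ 0 ∧ ¬ @IsFix ℕ L π.overParts π.plain then
    { overParts := (@tog ℕ L π.overParts π.plain).1
      plain := (@tog ℕ L π.overParts π.plain).2
      over_pos := by
        have hu := (@tog_spec ℕ L π.overParts π.plain h.1 h.2).1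
        intro x hx
        have hx' : x ∈ π.overParts.val + π.plain := by
          rw [← hu]
          exact Multiset.mem_add.2 (Or.inl (by rw [Finset.mem_val]; exact hx))
        rcases Multiset.mem_add.1 hx' with h' | h'
        · exact π.over_pos x h'
        · exact π.plain_pos x h'
      plain_pos := by
        have hu := (@tog_spec ℕ L π.overParts π.plain h.1 h.2).1
        intro x hx
        have hx' : x ∈ π.overParts.val + π.plain := by
          rw [← hu]
          exact Multiset.mem_add.2 (Or.inr hx)
        rcases Multiset.mem_add.1 hx' with h' | h'
        · exact π.over_pos x h'
        · exact π.plain_pos x h'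
      sum_eq := by
        have hu := (@tog_spec ℕ L π.overParts π.plain h.1 h.2).1
        have := congrArg Multiset.sum hu
        rw [Multiset.sum_add, Multiset.sum_add] at this
        rw [sum_val_id, this, ← sum_val_id, π.sum_eq] }
  else π

lemma togO_def (L : LinearOrder ℕ) {n : ℕ} (π : Overpartition n)
    (h1 : π.plain ≠ 0) (h2 : ¬ @IsFix ℕ L π.overParts π.plain) :
    (togO L π).overParts = (@tog ℕ L π.overParts π.plain).1 ∧
    (togO L π).plain = (@tog ℕ L π.overParts π.plain).2 := by
  rw [togO, dif_pos ⟨h1, h2⟩]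
  exact ⟨rfl, rfl⟩

lemma togO_spec (L : LinearOrder ℕ) {n : ℕ} (π : Overpartition n)
    (h1 : π.plain ≠ 0) (h2 : ¬ @IsFix ℕ L π.overParts π.plain) :
    (togO L π).plain ≠ 0 ∧
    ¬ @IsFix ℕ L (togO L π).overParts (togO L π).plain ∧
    (Even (@nstat ℕ L (togO L π).overParts (togO L π).plain) ↔
      ¬ Even (@nstat ℕ L π.overParts π.plain)) ∧
    togO L (togO L π) = π := by
  obtain ⟨ho, hp⟩ := togO_def L π h1 h2
  obtain ⟨hu, hne, hnf, hpar, hinv⟩ := @tog_spec ℕ L π.overParts π.plain h1 h2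
  rw [ho, hp]
  refine ⟨hne, hnf, ?_, ?_⟩
  · rcases hpar with h | h
    · rw [h, Nat.even_add_one]
    · rw [h, Nat.even_add_one]
      tauto
  · obtain ⟨ho', hp'⟩ := togO_def L (togO L π) (hp ▸ hne) (by rw [ho, hp]; exact hnf)
    refine Overpartition.ext'_s18 ?_ ?_
    · rw [ho', ho, hp]
      exact congrArg Prod.fst hinv
    · rw [hp', ho, hp]
      exact congrArg Prod.snd hinv


section Count

noncomputable def Dset (n : ℕ) : Finset (Finset ℕ) :=
  ((Finset.range (n+1)).powerset).filter
    (fun D => D.Nonempty ∧ (∀ x ∈ D, 0 < x) ∧ ∑ x ∈ D, x = n)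

lemma plain_min'_eq (L : LinearOrder ℕ) {n : ℕ} (π : Overpartition n) (m : ℕ)
    (hm : π.plain = {m})
    (h : π.plain.toFinset.Nonempty) : @Finset.min' ℕ L π.plain.toFinset h = m := by
  have ht : π.plain.toFinset = {m} := by rw [hm]; simp
  simp only [ht]
  exact @Finset.min'_singleton ℕ L m

lemma fix_card (L : LinearOrder ℕ) (n : ℕ) :
    (Finset.univ.filter (fun π : Overpartition n =>
      π.plain ≠ 0 ∧ @IsFix ℕ L π.overParts π.plain)).card = (Dset n).card := by
  apply Finset.card_bij (i := fun π hπ =>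
    insert (π.plain.toFinset.min' (by
      rw [Finset.mem_filter] at hπ
      simpa using hπ.2.1)) π.overParts)
  · -- maps into Dset
    intro π hπ
    rw [Finset.mem_filter] at hπ
    obtain ⟨-, hp, hfix⟩ := hπ
    obtain ⟨m, hm, hlt⟩ := (@isfix_iff ℕ L _ _ hp).1 hfix
    rw [plain_min'_eq L π m hm (by simpa using hp)]
    have hmnot : m ∉ π.overParts := @fix_notmem ℕ L _ _ hlt
    have hmM : m ∈ π.plain := by rw [hm]; exact Multiset.mem_singleton_self m
    have hsum : ∑ x ∈ insert m π.overParts, x = n := by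
      rw [Finset.sum_insert hmnot]
      have := π.sum_eq
      rw [hm] at this
      simp only [Multiset.sum_singleton] at this
      omega
    rw [Dset, Finset.mem_filter]
    refine ⟨?_, ⟨m, Finset.mem_insert_self _ _⟩, ?_, hsum⟩
    · rw [Finset.mem_powerset]
      intro x hx
      have hle : x ≤ ∑ y ∈ insert m π.overParts, y :=
        Finset.single_le_sum (f := fun y => y) (fun i _ => Nat.zero_le i) hx
      rw [hsum] at hle
      rw [Finset.mem_range]
      omega
    · intro x hx
      rcases Finset.mem_insert.1 hx with h | h
      · exact h ▸ π.plain_pos m hmM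
      · exact π.over_pos x h
  · -- injective
    intro π₁ h₁ π₂ h₂ he
    rw [Finset.mem_filter] at h₁ h₂
    obtain ⟨-, hp₁, hfix₁⟩ := h₁
    obtain ⟨-, hp₂, hfix₂⟩ := h₂
    obtain ⟨m₁, hm₁, hlt₁⟩ := (@isfix_iff ℕ L _ _ hp₁).1 hfix₁
    obtain ⟨m₂, hm₂, hlt₂⟩ := (@isfix_iff ℕ L _ _ hp₂).1 hfix₂
    rw [plain_min'_eq L π₁ m₁ hm₁ (by simpa using hp₁), plain_min'_eq L π₂ m₂ hm₂ (by simpa using hp₂)] at he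
    obtain ⟨hmm, hSS⟩ := @insert_lt_inj ℕ L instDecidableEqNat _ _ _ _ hlt₁ hlt₂ he
    refine Overpartition.ext'_s18 hSS ?_
    rw [hm₁, hm₂, hmm]
  · -- surjective
    intro D hD
    rw [Dset, Finset.mem_filter] at hD
    obtain ⟨hpow, hne, hpos, hsum⟩ := hD
    obtain ⟨m, hmD, hlt⟩ := @maxlike_exists ℕ L instDecidableEqNat D hne
    have hsum' : (∑ x ∈ D.erase m, x) + (({m} : Multiset ℕ)).sum = n := by
      simp only [Multiset.sum_singleton]
      rw [Finset.sum_erase_add D _ hmD]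
      exact hsum
    have hplainne : ({m} : Multiset ℕ) ≠ 0 := by simp
    refine ⟨⟨D.erase m, {m}, fun x hx => hpos x (Finset.mem_of_mem_erase hx),
      fun x hx => by rw [Multiset.mem_singleton] at hx; exact hx ▸ hpos m hmD,
      hsum'⟩, ?_, ?_⟩
    · rw [Finset.mem_filter]
      refine ⟨Finset.mem_univ _, hplainne, ?_⟩
      exact (@isfix_iff ℕ L (D.erase m) {m} hplainne).2 ⟨m, rfl, hlt⟩
    · rw [plain_min'_eq L (n := n) ⟨D.erase m, {m}, _, _, hsum'⟩ m rfl (by simpa using hplainne)]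
      exact Finset.insert_erase hmD

lemma count_parts (L : LinearOrder ℕ) (n : ℕ) :
    (Finset.univ.filter (fun π : Overpartition n =>
        π.plain ≠ 0 ∧ Even (@nstat ℕ L π.overParts π.plain))).card
      = (Dset n).card + (Finset.univ.filter (fun π : Overpartition n =>
        π.plain ≠ 0 ∧ Odd (@nstat ℕ L π.overParts π.plain))).card ∧
    (Finset.univ.filter (fun π : Overpartition n =>
        π.plain ≠ 0 ∧ Even (@nstat ℕ L π.overParts π.plain))).card
      + (Finset.univ.filter (fun π : Overpartition n =>
        π.plain ≠ 0 ∧ Odd (@nstat ℕ L π.overParts π.plain))).card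
      = (Finset.univ.filter (fun π : Overpartition n => π.plain ≠ 0)).card := by
  set fe := Finset.univ.filter (fun π : Overpartition n =>
    π.plain ≠ 0 ∧ Even (@nstat ℕ L π.overParts π.plain)) with hfe
  set fo := Finset.univ.filter (fun π : Overpartition n =>
    π.plain ≠ 0 ∧ Odd (@nstat ℕ L π.overParts π.plain)) with hfo
  set F := Finset.univ.filter (fun π : Overpartition n =>
    π.plain ≠ 0 ∧ @IsFix ℕ L π.overParts π.plain) with hF
  have hFsub : F ⊆ fe := by
    intro π h
    rw [hF, Finset.mem_filter] at h
    rw [hfe, Finset.mem_filter]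
    exact ⟨h.1, h.2.1, by rw [h.2.2.2]; exact Even.zero⟩
  have hbij : (fe \ F).card = fo.card := by
    apply Finset.card_bij (i := fun π _ => togO L π)
    · intro π hπ
      rw [Finset.mem_sdiff, hfe, hF, Finset.mem_filter, Finset.mem_filter] at hπ
      obtain ⟨⟨-, hp, hev⟩, hnF⟩ := hπ
      have hnfix : ¬ @IsFix ℕ L π.overParts π.plain := fun hf =>
        hnF ⟨Finset.mem_univ _, hp, hf⟩
      obtain ⟨hp', hnf', hpar, -⟩ := togO_spec L π hp hnfix
      rw [hfo, Finset.mem_filter]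
      refine ⟨Finset.mem_univ _, hp', ?_⟩
      rw [← Nat.not_even_iff_odd]
      rw [hpar]
      simp [hev]
    · intro π₁ h₁ π₂ h₂ he
      rw [Finset.mem_sdiff, hfe, hF, Finset.mem_filter, Finset.mem_filter] at h₁ h₂
      obtain ⟨⟨-, hp₁, -⟩, hnF₁⟩ := h₁
      obtain ⟨⟨-, hp₂, -⟩, hnF₂⟩ := h₂
      have hnfix₁ : ¬ @IsFix ℕ L π₁.overParts π₁.plain := fun hf =>
        hnF₁ ⟨Finset.mem_univ _, hp₁, hf⟩
      have hnfix₂ : ¬ @IsFix ℕ L π₂.overParts π₂.plain := fun hf =>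
        hnF₂ ⟨Finset.mem_univ _, hp₂, hf⟩
      have e1 := (togO_spec L π₁ hp₁ hnfix₁).2.2.2
      have e2 := (togO_spec L π₂ hp₂ hnfix₂).2.2.2
      rw [← e1, ← e2, he]
    · intro π hπ
      rw [hfo, Finset.mem_filter] at hπ
      obtain ⟨-, hp, hodd⟩ := hπ
      have hnfix : ¬ @IsFix ℕ L π.overParts π.plain := by
        intro hf
        rw [hf.2] at hodd
        simp at hodd
      obtain ⟨hp', hnf', hpar, hinv⟩ := togO_spec L π hp hnfix
      refine ⟨togO L π, ?_, hinv⟩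
      rw [Finset.mem_sdiff, hfe, hF, Finset.mem_filter, Finset.mem_filter]
      constructor
      · refine ⟨Finset.mem_univ _, hp', ?_⟩
        rw [hpar, Nat.not_even_iff_odd]
        exact hodd
      · rintro ⟨-, -, hf⟩
        exact hnf' hf
  constructor
  · have h1 := Finset.card_sdiff_add_card_eq_card hFsub
    rw [hbij] at h1
    rw [← fix_card L n, ← hF]
    omega
  · have h1 : fe = (Finset.univ.filter (fun π : Overpartition n => π.plain ≠ 0)).filter
        (fun π => Even (@nstat ℕ L π.overParts π.plain)) := by
      rw [hfe, Finset.filter_filter]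
    have h2 : fo = (Finset.univ.filter (fun π : Overpartition n => π.plain ≠ 0)).filter
        (fun π => ¬ Even (@nstat ℕ L π.overParts π.plain)) := by
      rw [hfo, Finset.filter_filter]
      apply Finset.filter_congr
      intro π _
      simp [Nat.not_even_iff_odd]
    rw [h1, h2]
    exact Finset.card_filter_add_card_filter_not _

end Count


noncomputable def LdualN : LinearOrder ℕ := inferInstanceAs (LinearOrder ℕᵒᵈ)

theorem stmt_18 (n : ℕ) (hn : 1 ≤ n) :
    Nat.card {π : Overpartition n // π.plain ≠ 0 ∧
        Even ((π.overParts.filter (fun x => ∃ y ∈ π.plain, y ≤ x)).card)} =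
      Nat.card {π : Overpartition n // π.plain ≠ 0 ∧
        Even ((π.overParts.filter (fun x => ∃ y ∈ π.plain, x ≤ y)).card)} ∧
    Nat.card {π : Overpartition n // π.plain ≠ 0 ∧
        Odd ((π.overParts.filter (fun x => ∃ y ∈ π.plain, y ≤ x)).card)} =
      Nat.card {π : Overpartition n // π.plain ≠ 0 ∧
        Odd ((π.overParts.filter (fun x => ∃ y ∈ π.plain, x ≤ y)).card)} := by
  have key : ∀ (p : Overpartition n → Prop), Nat.card {π : Overpartition n // p π} =
      (Finset.univ.filter p).card := fun p => by
    rw [Nat.card_eq_fintype_card, Fintype.card_subtype]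
  have hs1 : ∀ π : Overpartition n,
      (π.overParts.filter (fun x => ∃ y ∈ π.plain, y ≤ x)).card
        = @nstat ℕ Nat.instLinearOrder π.overParts π.plain := fun π => rfl
  have hs2 : ∀ π : Overpartition n,
      (π.overParts.filter (fun x => ∃ y ∈ π.plain, x ≤ y)).card
        = @nstat ℕ LdualN π.overParts π.plain := fun π => rfl
  have e1 : Finset.univ.filter (fun π : Overpartition n => π.plain ≠ 0 ∧
        Even ((π.overParts.filter (fun x => ∃ y ∈ π.plain, y ≤ x)).card))
      = Finset.univ.filter (fun π : Overpartition n => π.plain ≠ 0 ∧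
        Even (@nstat ℕ Nat.instLinearOrder π.overParts π.plain)) :=
    Finset.filter_congr (fun π _ => by rw [hs1])
  have e2 : Finset.univ.filter (fun π : Overpartition n => π.plain ≠ 0 ∧
        Even ((π.overParts.filter (fun x => ∃ y ∈ π.plain, x ≤ y)).card))
      = Finset.univ.filter (fun π : Overpartition n => π.plain ≠ 0 ∧
        Even (@nstat ℕ LdualN π.overParts π.plain)) :=
    Finset.filter_congr (fun π _ => by rw [hs2])
  have e3 : Finset.univ.filter (fun π : Overpartition n => π.plain ≠ 0 ∧
        Odd ((π.overParts.filter (fun x => ∃ y ∈ π.plain, y ≤ x)).card))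
      = Finset.univ.filter (fun π : Overpartition n => π.plain ≠ 0 ∧
        Odd (@nstat ℕ Nat.instLinearOrder π.overParts π.plain)) :=
    Finset.filter_congr (fun π _ => by rw [hs1])
  have e4 : Finset.univ.filter (fun π : Overpartition n => π.plain ≠ 0 ∧
        Odd ((π.overParts.filter (fun x => ∃ y ∈ π.plain, x ≤ y)).card))
      = Finset.univ.filter (fun π : Overpartition n => π.plain ≠ 0 ∧
        Odd (@nstat ℕ LdualN π.overParts π.plain)) :=
    Finset.filter_congr (fun π _ => by rw [hs2])
  obtain ⟨c1, c2⟩ := count_parts Nat.instLinearOrder n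
  obtain ⟨d1, d2⟩ := count_parts LdualN n
  rw [key, key, key, key]
  simp only [hs1, hs2]
  constructor
  · omega
  · omega
end
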